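/- arXiv:1902.02736 — 5 statements merged into one kernel-verified Lean document; each statement's English description precedes it below -/
import Mathlib

section
/- Let δ be an ordinal of cofinality ω₁ and let A be any nontrivial abelian group. Then there exists a nontrivial coherent family Φ = {φ_β : β → A | β < δ}. -/
noncomputable section
open Ordinal Set

/-- `Φ` codes a coherent family of functions `φ_β = Φ β : β → A` (`β < δ`):
`φ_γ ↾ β =* φ_β` (agreement at all but finitely many arguments) for all `β ≤ γ < δ`. -/
def CoherentFam {A : Type*} (δ : Ordinal.{0}) (Φ : Ordinal.{0} → Ordinal.{0} → A) : Prop :=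
  ∀ β γ, β ≤ γ → γ < δ → {α : Ordinal | α < β ∧ Φ γ α ≠ Φ β α}.Finite

/-- The family coded by `Φ` is trivial: some `f : δ → A` satisfies `f ↾ β =* φ_β`
for all `β < δ`. -/
def TrivialFam {A : Type*} (δ : Ordinal.{0}) (Φ : Ordinal.{0} → Ordinal.{0} → A) : Prop :=
  ∃ f : Ordinal → A, ∀ β, β < δ → {α : Ordinal | α < β ∧ f α ≠ Φ β α}.Finite

attribute [local instance] Classical.propDecidable

namespace S10


def o1 : Ordinal.{0} := (Cardinal.aleph 1).ord

lemma card_le_of_lt_o1 {β : Ordinal.{0}} (h : β < o1) : β.card ≤ Cardinal.aleph0 := by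
  have := Cardinal.lt_ord.1 h
  rwa [← Cardinal.succ_aleph0, Order.lt_succ_iff] at this

lemma countable_Iio {β : Ordinal.{0}} (h : β < o1) : (Set.Iio β).Countable := by
  rw [← Cardinal.le_aleph0_iff_set_countable, Ordinal.mk_Iio_ordinal]
  exact Cardinal.lift_le_aleph0.2 (card_le_of_lt_o1 h)

lemma not_countable_Iio_o1 : ¬ (Set.Iio o1).Countable := by
  intro hc
  have h1 := Set.Countable.le_aleph0 hc
  rw [Ordinal.mk_Iio_ordinal] at h1
  have h2 : (Cardinal.aleph 1).ord.card ≤ Cardinal.aleph0 := Cardinal.lift_le_aleph0.1 h1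
  rw [Cardinal.card_ord] at h2
  exact absurd h2 (not_le.2 Cardinal.aleph0_lt_aleph_one)

lemma o1_isLimit : Order.IsSuccLimit o1 :=
  Cardinal.isSuccLimit_ord (le_of_lt Cardinal.aleph0_lt_aleph_one)

lemma bdd_of_countable {S : Set Ordinal.{0}} (hS : S ⊆ Set.Iio o1) (hc : S.Countable) :
    ∃ μ, μ < o1 ∧ ∀ x ∈ S, x < μ := by
  rcases S.eq_empty_or_nonempty with rfl | hne
  · exact ⟨1, Ordinal.one_lt_of_isSuccLimit o1_isLimit, by simp⟩
  obtain ⟨f, hf⟩ := hc.exists_eq_range hne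
  have hfi : ∀ n, f n < o1 := fun n => hS (hf ▸ Set.mem_range_self n)
  have hsup : (⨆ n, f n) < o1 := by
    apply Ordinal.iSup_lt_ord _ hfi
    rw [show o1.cof = Cardinal.aleph 1 from Cardinal.isRegular_aleph_one.cof_eq, Cardinal.mk_nat]
    exact Cardinal.aleph0_lt_aleph_one
  refine ⟨(⨆ n, f n) + 1, ?_, ?_⟩
  · rw [Ordinal.add_one_eq_succ]
    exact o1_isLimit.succ_lt hsup
  · intro x hx
    rw [hf] at hx
    obtain ⟨n, rfl⟩ := hx
    exact lt_of_le_of_lt (Ordinal.le_iSup f n) (lt_add_one _)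

lemma unbounded_of_not_countable {S : Set Ordinal.{0}} (hS : S ⊆ Set.Iio o1)
    (hc : ¬ S.Countable) : ∀ x, x < o1 → ∃ y ∈ S, x < y := by
  intro x hx
  by_contra h
  push_neg at h
  apply hc
  apply (countable_Iio (o1_isLimit.succ_lt hx)).mono
  intro y hy
  exact lt_of_le_of_lt (h y hy) (Order.lt_succ x)

/-- pigeonhole: an uncountable set mapped into a countable set has an uncountable fiber -/
lemma uncountable_fiber {S : Set Ordinal.{0}} {V : Type 1} {F : Ordinal.{0} → V} {C : Set V}
    (hc : ¬ S.Countable) (hC : C.Countable) (hF : ∀ x ∈ S, F x ∈ C) :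
    ∃ v ∈ C, ¬ (S ∩ F ⁻¹' {v}).Countable := by
  by_contra h
  push_neg at h
  apply hc
  have hsub : S ⊆ ⋃ v ∈ C, (S ∩ F ⁻¹' {v}) := by
    intro x hx
    exact Set.mem_biUnion (hF x hx) ⟨hx, rfl⟩
  exact (Set.Countable.biUnion hC (fun v hv => h v hv)).mono hsub


/-! ### The coherent sequence of injections -/

/-- `Q P β g`: `g` is a good level-`β` function relative to the family `P`:
injective below `β`, with infinitely many odd values unused, and coherent
(mod finite) with every earlier level. -/
def Q (P : Ordinal.{0} → Ordinal.{0} → ℕ) (β : Ordinal.{0}) (g : Ordinal.{0} → ℕ) : Prop :=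
  (∀ ξ ξ', ξ < ξ' → ξ' < β → g ξ ≠ g ξ') ∧
  {v : ℕ | Odd v ∧ ∀ ξ, ξ < β → g ξ ≠ v}.Infinite ∧
  ∀ β', β' < β → {ξ | ξ < β' ∧ g ξ ≠ P β' ξ}.Finite

lemma Q_congr {P P' : Ordinal.{0} → Ordinal.{0} → ℕ} {β g} (hp : ∀ β' < β, P β' = P' β') :
    Q P β g ↔ Q P' β g := by
  unfold Q
  constructor <;> rintro ⟨h1, h2, h3⟩ <;> refine ⟨h1, h2, fun β' hβ' => ?_⟩
  · rw [← hp β' hβ']; exact h3 β' hβ'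
  · rw [hp β' hβ']; exact h3 β' hβ'

/-- The coherent sequence of injections, by transfinite recursion with choice. -/
def E : Ordinal.{0} → Ordinal.{0} → ℕ :=
  Ordinal.lt_wf.fix fun β IH =>
    if h : ∃ g, Q (fun β' => if hb : β' < β then IH β' hb else fun _ => 0) β g
    then h.choose else fun _ => 0

lemma exists_good_zero : ∃ g, Q E 0 g := by
  refine ⟨fun _ => 0, ?_, ?_, ?_⟩
  · intro ξ ξ' _ h
    exact absurd h (not_lt_of_ge (zero_le (a := ξ')))
  · apply Set.infinite_of_injective_forall_mem (f := fun n : ℕ => 2 * n + 1)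
    · intro a b hab
      simpa using hab
    · intro n
      exact ⟨⟨n, by ring⟩, fun ξ h => absurd h (not_lt_of_ge (zero_le (a := ξ)))⟩
  · intro β' h
    exact absurd h (not_lt_of_ge (zero_le (a := β')))

lemma exists_good_succ (β₀ : Ordinal.{0}) (IH : Q E β₀ (E β₀)) :
    ∃ g, Q E (Order.succ β₀) g := by
  obtain ⟨v₀, hv₀odd, hv₀⟩ := IH.2.1.nonempty
  refine ⟨fun ξ => if ξ = β₀ then v₀ else E β₀ ξ, ?_, ?_, ?_⟩
  · intro ξ ξ' hlt hξ'
    dsimp only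
    rcases (Order.lt_succ_iff.1 hξ').eq_or_lt with rfl | h'
    · rw [if_pos rfl, if_neg (ne_of_lt hlt)]
      exact fun hc => hv₀ ξ hlt hc
    · rw [if_neg (ne_of_lt (hlt.trans h')), if_neg (ne_of_lt h')]
      exact IH.1 ξ ξ' hlt h'
  · apply Set.Infinite.mono ?_ (IH.2.1.diff (Set.finite_singleton v₀))
    rintro v ⟨⟨hvodd, hvun⟩, hvne⟩
    refine ⟨hvodd, fun ξ hξ => ?_⟩
    dsimp only
    rcases (Order.lt_succ_iff.1 hξ).eq_or_lt with rfl | h'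
    · rw [if_pos rfl]
      exact fun hc => hvne (hc ▸ rfl)
    · rw [if_neg (ne_of_lt h')]
      exact hvun ξ h'
  · intro β' hβ'
    have hsub : {ξ | ξ < β' ∧ (if ξ = β₀ then v₀ else E β₀ ξ) ≠ E β' ξ} ⊆
        {ξ | ξ < β' ∧ E β₀ ξ ≠ E β' ξ} := by
      rintro ξ ⟨hξ, hne⟩
      have : ξ ≠ β₀ := ne_of_lt (lt_of_lt_of_le hξ (Order.lt_succ_iff.1 hβ'))
      rw [if_neg this] at hne
      exact ⟨hξ, hne⟩
    rcases (Order.lt_succ_iff.1 hβ').eq_or_lt with rfl | h'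
    · apply Set.Finite.subset _ hsub
      have : {ξ | ξ < β' ∧ E β' ξ ≠ E β' ξ} = ∅ := by
        ext ξ; simp
      rw [this]
      exact Set.finite_empty
    · exact (IH.2.2 β' h').subset hsub

/-! ### the limit step machinery -/

section LimitStep

variable (b : ℕ → Ordinal.{0})

/-- membership in the `n`-th block of the ladder `b` -/
def blk (n : ℕ) (ξ : Ordinal.{0}) : Prop := b n ≤ ξ ∧ ξ < b (n + 1)

/-- the conditions on the `n`-th step `s = (pieceₙ, ρₙ)` of the gluing construction,
relative to the previous steps `prev`. -/
def OkStep (prev : ℕ → (Ordinal.{0} → ℕ) × ℕ) (n : ℕ) (s : (Ordinal.{0} → ℕ) × ℕ) : Prop :=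
  (∀ ξ ξ', blk b n ξ → blk b n ξ' → ξ ≠ ξ' → s.1 ξ ≠ s.1 ξ') ∧
  {ξ | blk b n ξ ∧ s.1 ξ ≠ E (b (n + 1)) ξ}.Finite ∧
  (∀ j, j < n → ∀ ξ η, blk b j ξ → blk b n η → (prev j).1 ξ ≠ s.1 η) ∧
  Odd s.2 ∧
  (∀ j, j < n → (prev j).2 ≠ s.2) ∧
  (∀ j, j < n → ∀ η, blk b n η → s.1 η ≠ (prev j).2) ∧
  (∀ η, blk b n η → s.1 η ≠ s.2) ∧
  (∀ j, j < n → ∀ ξ, blk b j ξ → (prev j).1 ξ ≠ s.2)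

lemma OkStep_congr {prev prev' : ℕ → (Ordinal.{0} → ℕ) × ℕ} {n s}
    (h : ∀ j, j < n → prev j = prev' j) (hs : OkStep b prev n s) : OkStep b prev' n s := by
  obtain ⟨h1, h2, h3, h4, h5, h6, h7, h8⟩ := hs
  refine ⟨h1, h2, fun j hj => ?_, h4, fun j hj => ?_, fun j hj => ?_, h7, fun j hj => ?_⟩
  · rw [← h j hj]; exact h3 j hj
  · rw [← h j hj]; exact h5 j hj
  · rw [← h j hj]; exact h6 j hj
  · rw [← h j hj]; exact h8 j hj

/-- choice of the `n`-th step given the previous ones -/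
def stepChoice (prev : ℕ → (Ordinal.{0} → ℕ) × ℕ) (n : ℕ) : (Ordinal.{0} → ℕ) × ℕ :=
  if h : ∃ s, OkStep b prev n s then h.choose else (fun _ => 0, 0)

/-- prefixes of the sequence of steps -/
def Fpre : ℕ → ℕ → (Ordinal.{0} → ℕ) × ℕ
  | 0 => fun _ => (fun _ => 0, 0)
  | (m + 1) => fun j => if j = m then stepChoice b (Fpre m) m else Fpre m j

/-- the sequence of steps -/
def FF (n : ℕ) : (Ordinal.{0} → ℕ) × ℕ := Fpre b (n + 1) n

lemma FF_eq (n : ℕ) : FF b n = stepChoice b (Fpre b n) n := by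
  show Fpre b (n + 1) n = _
  simp [Fpre]

lemma Fpre_stable : ∀ m j, j < m → Fpre b m j = FF b j := by
  intro m
  induction m with
  | zero => exact fun j h => absurd h (Nat.not_lt_zero j)
  | succ m ih =>
    intro j hj
    rcases Nat.lt_succ_iff_lt_or_eq.1 hj with h | rfl
    · show (if j = m then _ else Fpre b m j) = FF b j
      rw [if_neg (Nat.ne_of_lt h)]
      exact ih j h
    · show (if j = j then stepChoice b (Fpre b j) j else _) = FF b j
      rw [if_pos rfl, FF_eq]

variable {b}

lemma step_exists {β : Ordinal.{0}} (hβ : β < o1)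
    (IH : ∀ β' < β, Q E β' (E β'))
    (hblt : ∀ n, b n < β) (hbmono : StrictMono b)
    (prev : ℕ → (Ordinal.{0} → ℕ) × ℕ) (n : ℕ)
    (hprev : ∀ j, j < n → OkStep b prev j (prev j)) :
    ∃ s, OkStep b prev n s := by
  classical
  have hQn : Q E (b (n + 1)) (E (b (n + 1))) := IH _ (hblt (n + 1))
  have hEinj : ∀ ξ ξ', ξ < ξ' → ξ' < b (n + 1) → E (b (n + 1)) ξ ≠ E (b (n + 1)) ξ' := hQn.1
  have hblk_lt : ∀ j ξ, j < n → blk b j ξ → ξ < b (n + 1) := by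
    intro j ξ hj hξ
    exact hξ.2.trans_le (hbmono.monotone (by omega))
  have pairCoh : ∀ j, j < n → {ξ | ξ < b (j + 1) ∧ E (b (n + 1)) ξ ≠ E (b (j + 1)) ξ}.Finite :=
    fun j hj => hQn.2.2 (b (j + 1)) (hbmono (by omega))
  set Dev : ℕ → Set Ordinal.{0} :=
    fun j => {η | blk b j η ∧ (prev j).1 η ≠ E (b (n + 1)) η} with hDev
  have hDevFin : ∀ j, j < n → (Dev j).Finite := by
    intro j hj
    apply (((hprev j hj).2.1).union (pairCoh j hj)).subset
    rintro η ⟨hb, hne⟩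
    by_cases hc : (prev j).1 η = E (b (j + 1)) η
    · right
      exact ⟨hb.2, fun h => hne (hc.trans h.symm)⟩
    · left
      exact ⟨hb, hc⟩
  have hBadFin : ((⋃ j ∈ Set.Iio n, (prev j).1 '' Dev j) ∪
      (⋃ j ∈ Set.Iio n, {(prev j).2})).Finite := by
    apply Set.Finite.union
    · exact Set.Finite.biUnion (Set.finite_Iio n) (fun j hj => ((hDevFin j hj).image _))
    · exact Set.Finite.biUnion (Set.finite_Iio n) (fun j _ => Set.finite_singleton _)
  set W : Set ℕ := {v | Odd v ∧ (∀ ξ, ξ < b (n + 1) → E (b (n + 1)) ξ ≠ v) ∧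
    (∀ j, j < n → ∀ ξ, blk b j ξ → (prev j).1 ξ ≠ v) ∧ (∀ j, j < n → (prev j).2 ≠ v)} with hW
  have hWinf : W.Infinite := by
    apply Set.Infinite.mono ?_ (hQn.2.1.diff hBadFin)
    rintro v ⟨⟨hvo, hvE⟩, hvn⟩
    rw [Set.mem_union, not_or] at hvn
    obtain ⟨hvn1, hvn2⟩ := hvn
    refine ⟨hvo, hvE, ?_, ?_⟩
    · intro j hj ξ hξ hc
      by_cases hd : (prev j).1 ξ = E (b (n + 1)) ξ
      · exact hvE ξ (hblk_lt j ξ hj hξ) (by rw [← hd, hc])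
      · exact hvn1 (Set.mem_biUnion (show j ∈ Set.Iio n from hj) ⟨ξ, ⟨hξ, hd⟩, hc⟩)
    · intro j hj hc
      exact hvn2 (Set.mem_biUnion (show j ∈ Set.Iio n from hj) (by rw [← hc]; rfl))
  set embW : ℕ ↪ ↥W := Set.Infinite.natEmbedding W hWinf with hembW
  have hWprop : ∀ k : ℕ, Odd ((embW k : ℕ)) ∧
      (∀ ξ, ξ < b (n + 1) → E (b (n + 1)) ξ ≠ (embW k : ℕ)) ∧
      (∀ j, j < n → ∀ ξ, blk b j ξ → (prev j).1 ξ ≠ (embW k : ℕ)) ∧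
      (∀ j, j < n → (prev j).2 ≠ (embW k : ℕ)) := fun k => (embW k).2
  have hembInj : ∀ k k' : ℕ, ((embW k : ℕ)) = ((embW k' : ℕ)) → k = k' :=
    fun k k' h => embW.injective (Subtype.ext h)
  set Coll : Set Ordinal.{0} := {ξ | blk b n ξ ∧
    ((∃ j, j < n ∧ ∃ η, blk b j η ∧ (prev j).1 η = E (b (n + 1)) ξ) ∨
     (∃ j, j < n ∧ (prev j).2 = E (b (n + 1)) ξ))} with hColl
  have hCollFin : Coll.Finite := by
    have himg : E (b (n + 1)) '' Coll ⊆ (⋃ j ∈ Set.Iio n, (prev j).1 '' Dev j) ∪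
        (⋃ j ∈ Set.Iio n, {(prev j).2}) := by
      rintro v ⟨ξ, ⟨hbξ, hcase⟩, rfl⟩
      rcases hcase with ⟨j, hj, η, hbη, heq⟩ | ⟨j, hj, heq⟩
      · left
        apply Set.mem_biUnion (show j ∈ Set.Iio n from hj)
        refine ⟨η, ⟨hbη, fun hd => ?_⟩, heq⟩
        have hηξ : η < ξ := lt_of_lt_of_le hbη.2 (le_trans (hbmono.monotone (by omega)) hbξ.1)
        exact hEinj η ξ hηξ hbξ.2 (by rw [← hd, heq])
      · right
        exact Set.mem_biUnion (show j ∈ Set.Iio n from hj) (by rw [← heq]; rfl)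
    apply Set.Finite.of_finite_image (hBadFin.subset himg)
    intro ξ hξ ξ' hξ' he
    by_contra hne
    rcases Ne.lt_or_gt hne with h | h
    · exact hEinj ξ ξ' h hξ'.1.2 he
    · exact hEinj ξ' ξ h hξ.1.2 he.symm
  obtain ⟨ι, hι⟩ := Set.countable_iff_exists_injOn.1 hCollFin.countable
  refine ⟨⟨fun ξ => if ξ ∈ Coll then (embW (ι ξ + 1) : ℕ) else E (b (n + 1)) ξ,
    (embW 0 : ℕ)⟩, ?_, ?_, ?_, ?_, ?_, ?_, ?_, ?_⟩
  · -- injective on the block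
    intro ξ ξ' h1 h2 hne
    dsimp only
    by_cases c1 : ξ ∈ Coll <;> by_cases c2 : ξ' ∈ Coll
    · rw [if_pos c1, if_pos c2]
      intro h
      have := hembInj _ _ h
      exact hne (hι c1 c2 (by omega))
    · rw [if_pos c1, if_neg c2]
      exact fun h => (hWprop (ι ξ + 1)).2.1 ξ' h2.2 h.symm
    · rw [if_neg c1, if_pos c2]
      exact fun h => (hWprop (ι ξ' + 1)).2.1 ξ h1.2 h
    · rw [if_neg c1, if_neg c2]
      rcases hne.lt_or_gt with h | h
      · exact hEinj ξ ξ' h h2.2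
      · exact fun hc => hEinj ξ' ξ h h1.2 hc.symm
  · -- finite deviation from the reference level
    apply hCollFin.subset
    rintro ξ ⟨hb, hne⟩
    by_contra hc
    simp only [if_neg hc] at hne
    exact hne rfl
  · -- fresh relative to earlier blocks
    intro j hj ξ η hbξ hbη
    dsimp only
    by_cases c : η ∈ Coll
    · rw [if_pos c]
      exact (hWprop _).2.2.1 j hj ξ hbξ
    · rw [if_neg c]
      intro h
      exact c ⟨hbη, Or.inl ⟨j, hj, ξ, hbξ, h⟩⟩
  · -- ρ is odd
    exact (hWprop 0).1
  · -- ρ differs from the earlier ρ's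
    intro j hj
    exact (hWprop 0).2.2.2 j hj
  · -- the block avoids the earlier ρ's
    intro j hj η hbη
    dsimp only
    by_cases c : η ∈ Coll
    · rw [if_pos c]
      exact fun h => (hWprop _).2.2.2 j hj h.symm
    · rw [if_neg c]
      intro h
      exact c ⟨hbη, Or.inr ⟨j, hj, h.symm⟩⟩
  · -- the block avoids ρ
    intro η hbη
    dsimp only
    by_cases c : η ∈ Coll
    · rw [if_pos c]
      intro h
      have := hembInj _ _ h
      omega
    · rw [if_neg c]
      exact (hWprop 0).2.1 η hbη.2
  · -- ρ is fresh relative to earlier blocks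
    intro j hj ξ hbξ
    exact (hWprop 0).2.2.1 j hj ξ hbξ

lemma step_good {β : Ordinal.{0}} (hβ : β < o1)
    (IH : ∀ β' < β, Q E β' (E β'))
    (hblt : ∀ n, b n < β) (hbmono : StrictMono b) :
    ∀ n, OkStep b (FF b) n (FF b n) := by
  intro n
  induction n using Nat.strong_induction_on with
  | _ n ihn =>
  have hex : ∃ s, OkStep b (Fpre b n) n s := by
    apply step_exists hβ IH hblt hbmono
    intro j hj
    rw [Fpre_stable b n j hj]
    exact OkStep_congr b (fun k hk => (Fpre_stable b n k (hk.trans hj)).symm) (ihn j hj)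
  rw [FF_eq, stepChoice, dif_pos hex]
  exact OkStep_congr b (fun j hj => Fpre_stable b n j hj) hex.choose_spec

end LimitStep

lemma exists_good_limit (β : Ordinal.{0}) (hβ : β < o1) (hlim : Order.IsSuccLimit β)
    (IH : ∀ β' < β, Q E β' (E β')) : ∃ g, Q E β g := by
  classical
  -- a ladder converging to β
  obtain ⟨sf, hsf⟩ := (countable_Iio hβ).exists_eq_range ⟨0, hlim.pos⟩
  have hslt : ∀ n, sf n < β := fun n => by
    have : sf n ∈ Set.Iio β := by rw [hsf]; exact Set.mem_range_self n
    exact this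
  set b : ℕ → Ordinal.{0} := fun n => Nat.rec 0 (fun m bm => max (bm + 1) (sf m + 1)) n with hbdef
  have hb0 : b 0 = 0 := rfl
  have hbs : ∀ n, b (n + 1) = max (b n + 1) (sf n + 1) := fun n => rfl
  have hblt : ∀ n, b n < β := by
    intro n
    induction n with
    | zero => exact hlim.pos
    | succ m ihm =>
      rw [hbs]
      apply max_lt
      · rw [Ordinal.add_one_eq_succ]; exact hlim.succ_lt ihm
      · rw [Ordinal.add_one_eq_succ]; exact hlim.succ_lt (hslt m)
  have hbmono : StrictMono b := by
    apply strictMono_nat_of_lt_succ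
    intro n
    rw [hbs]
    exact lt_of_lt_of_le (lt_add_one _) (le_max_left _ _)
  have hbcof : ∀ ξ, ξ < β → ∃ n, ξ < b (n + 1) := by
    intro ξ hξ
    have : ξ ∈ Set.range sf := by rw [← hsf]; exact hξ
    obtain ⟨n, rfl⟩ := this
    exact ⟨n, lt_of_lt_of_le (lt_add_one _) ((le_max_right _ _).trans (hbs n).ge)⟩
  have hOk : ∀ n, OkStep b (FF b) n (FF b n) := step_good hβ IH hblt hbmono
  -- the glued function
  have hidx' : ∀ ξ (h : ξ < β), blk b (Nat.find (hbcof ξ h)) ξ := by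
    intro ξ h
    constructor
    · rcases Nat.eq_zero_or_eq_succ_pred (Nat.find (hbcof ξ h)) with h0 | hs'
      · rw [h0, hb0]; exact zero_le (a := ξ)
      · rw [hs']
        by_contra hc
        push_neg at hc
        exact Nat.find_min (hbcof ξ h) (by rw [hs']; exact Nat.lt_succ_self _) hc
    · exact Nat.find_spec (hbcof ξ h)
  refine ⟨fun ξ => if h : ξ < β then (FF b (Nat.find (hbcof ξ h))).1 ξ else 0, ?_, ?_, ?_⟩
  · -- injectivity
    intro ξ ξ' hlt hξ'
    have hξ : ξ < β := hlt.trans hξ'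
    simp only [dif_pos hξ, dif_pos hξ']
    set j := Nat.find (hbcof ξ hξ) with hj
    set n := Nat.find (hbcof ξ' hξ') with hn
    have hbj := hidx' ξ hξ
    have hbn := hidx' ξ' hξ'
    rw [← hj] at hbj
    rw [← hn] at hbn
    rcases lt_trichotomy j n with h | h | h
    · exact (hOk n).2.2.1 j h ξ ξ' hbj hbn
    · rw [h] at hbj ⊢
      exact (hOk n).1 ξ ξ' hbj hbn (ne_of_lt hlt)
    · exfalso
      have : b (n + 1) ≤ b j := hbmono.monotone h
      exact absurd (hbn.2.trans_le (this.trans hbj.1)) (not_lt.2 hlt.le)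
  · -- infinitely many unused odd values
    apply Set.infinite_of_injective_forall_mem (f := fun m : ℕ => (FF b m).2)
    · intro m m' hmm'
      by_contra hne
      rcases Ne.lt_or_gt hne with h | h
      · exact (hOk m').2.2.2.2.1 m h hmm'
      · exact (hOk m).2.2.2.2.1 m' h hmm'.symm
    · intro m
      refine ⟨(hOk m).2.2.2.1, ?_⟩
      intro ξ hξ
      simp only [dif_pos hξ]
      set k := Nat.find (hbcof ξ hξ) with hk
      have hbk := hidx' ξ hξ
      rw [← hk] at hbk
      rcases lt_trichotomy k m with h | h | h
      · exact (hOk m).2.2.2.2.2.2.2 k h ξ hbk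
      · rw [h] at hbk ⊢
        exact (hOk m).2.2.2.2.2.2.1 ξ hbk
      · exact (hOk k).2.2.2.2.2.1 m h ξ hbk
  · -- coherence with the earlier levels
    intro β' hβ'
    obtain ⟨m, hm⟩ := hbcof β' hβ'
    have pairCohGen : ∀ k, {ξ | ξ < β' ∧ ξ < b (k + 1) ∧ E (b (k + 1)) ξ ≠ E β' ξ}.Finite := by
      intro k
      rcases lt_trichotomy β' (b (k + 1)) with h | h | h
      · apply ((IH (b (k + 1)) (hblt (k + 1))).2.2 β' h).subset
        rintro ξ ⟨h1, _, h3⟩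
        exact ⟨h1, h3⟩
      · apply Set.finite_empty.subset
        rintro ξ ⟨_, _, h3⟩
        exact h3 (by rw [h])
      · apply ((IH β' hβ').2.2 (b (k + 1)) h).subset
        rintro ξ ⟨_, h2, h3⟩
        exact ⟨h2, fun hc => h3 hc.symm⟩
    apply Set.Finite.subset (Set.Finite.biUnion (Set.finite_Iio (m + 1))
      (t := fun k => {ξ : Ordinal.{0} | blk b k ξ ∧ (FF b k).1 ξ ≠ E (b (k + 1)) ξ} ∪
        {ξ : Ordinal.{0} | ξ < β' ∧ ξ < b (k + 1) ∧ E (b (k + 1)) ξ ≠ E β' ξ})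
      (fun k _ => ((hOk k).2.1).union (pairCohGen k)))
    rintro ξ ⟨hξβ', hne⟩
    have hξ : ξ < β := hξβ'.trans hβ'
    simp only [dif_pos hξ] at hne
    set k := Nat.find (hbcof ξ hξ) with hk
    have hbk := hidx' ξ hξ
    rw [← hk] at hbk
    have hkm : k ∈ Set.Iio (m + 1) := by
      have : ξ < b (m + 1) := hξβ'.trans hm
      exact Nat.lt_succ_of_le (Nat.find_le this)
    apply Set.mem_biUnion hkm
    by_cases hc : (FF b k).1 ξ = E (b (k + 1)) ξ
    · right
      exact ⟨hξβ', hbk.2, by rw [← hc]; exact fun h => hne h⟩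
    · left
      exact ⟨hbk, hc⟩

lemma exists_good (β : Ordinal.{0}) (hβ : β < o1)
    (IH : ∀ β' < β, Q E β' (E β')) : ∃ g, Q E β g := by
  rcases Ordinal.zero_or_succ_or_isSuccLimit β with rfl | ⟨β₀, rfl⟩ | hlim
  · exact exists_good_zero
  · exact exists_good_succ β₀ (IH β₀ (Order.lt_succ β₀))
  · exact exists_good_limit β hβ hlim IH

lemma E_good : ∀ β, β < o1 → Q E β (E β) := by
  intro β
  induction β using WellFounded.induction Ordinal.lt_wf with
  | _ β IH =>
  intro hβ
  have hfix := Ordinal.lt_wf.fix_eq (fun β IH' =>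
    if h : ∃ g, Q (fun β' => if hb : β' < β then IH' β' hb else fun _ => 0) β g
    then h.choose else fun _ => 0) β
  have hP : ∀ β' < β, (fun β'' => if hb : β'' < β then E β'' else fun _ => 0) β' = E β' :=
    fun β' h => dif_pos h
  have hex : ∃ g, Q (fun β'' => if hb : β'' < β then E β'' else fun _ => 0) β g := by
    obtain ⟨g, hg⟩ := exists_good β hβ (fun β' hb => IH β' hb (hb.trans hβ))
    exact ⟨g, (Q_congr hP).2 hg⟩
  have hEβ : E β = if h : ∃ g, Q (fun β'' => if hb : β'' < β then E β'' else fun _ => 0) β g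
      then h.choose else fun _ => 0 := hfix
  rw [hEβ, dif_pos hex]
  exact (Q_congr hP).1 hex.choose_spec

/-- pairwise coherence of the family -/
lemma E_coh {β γ : Ordinal.{0}} (hβγ : β ≤ γ) (hγ : γ < o1) :
    {ξ | ξ < β ∧ E γ ξ ≠ E β ξ}.Finite := by
  rcases hβγ.eq_or_lt with rfl | h
  · have : {ξ | ξ < β ∧ E β ξ ≠ E β ξ} = ∅ := by ext ξ; simp
    rw [this]; exact Set.finite_empty
  · exact (E_good γ hγ).2.2 β h

/-! ### block coding arithmetic -/

lemma block_div (ξ : Ordinal.{0}) (k : ℕ) : (Ordinal.omega0 * ξ + k) / Ordinal.omega0 = ξ := by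
  rw [Ordinal.mul_add_div _ Ordinal.omega0_ne_zero,
    Ordinal.div_eq_zero_of_lt (Ordinal.nat_lt_omega0 k), add_zero]

lemma block_mod (ξ : Ordinal.{0}) (k : ℕ) : (Ordinal.omega0 * ξ + k) % Ordinal.omega0 = k := by
  rw [Ordinal.mul_add_mod_self, Ordinal.mod_eq_of_lt (Ordinal.nat_lt_omega0 k)]

lemma block_lt (ξ : Ordinal.{0}) (k : ℕ) :
    Ordinal.omega0 * ξ + k < Ordinal.omega0 * (ξ + 1) := by
  rw [mul_add, mul_one]
  exact add_lt_add_right (Ordinal.nat_lt_omega0 k) _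

lemma div_omega_le (α : Ordinal.{0}) : α / Ordinal.omega0 ≤ α :=
  le_trans (Ordinal.le_mul_right _ Ordinal.omega0_pos) (Ordinal.mul_div_le α _)

lemma block_succ_lt_o1 {ξ : Ordinal.{0}} (h : ξ < o1) : Ordinal.omega0 * (ξ + 1) < o1 := by
  rw [o1, Cardinal.lt_ord, Ordinal.card_mul, Ordinal.card_add, Ordinal.card_omega0]
  have h1 : ξ.card ≤ Cardinal.aleph0 := card_le_of_lt_o1 h
  have h2 : (ξ + 1 : Ordinal).card ≤ Cardinal.aleph0 := by
    rw [Ordinal.card_add]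
    simp only [Ordinal.card_one]
    exact le_trans (add_le_add h1 (Cardinal.one_le_aleph0)) (by rw [Cardinal.aleph0_add_aleph0])
  have : Cardinal.aleph0 * (ξ + 1 : Ordinal).card ≤ Cardinal.aleph0 := by
    calc Cardinal.aleph0 * (ξ + 1 : Ordinal).card ≤ Cardinal.aleph0 * Cardinal.aleph0 :=
      mul_le_mul_right h2 _
    _ = Cardinal.aleph0 := Cardinal.aleph0_mul_aleph0
  calc Cardinal.aleph0 * ((ξ : Ordinal).card + (1 : Ordinal).card) =
      Cardinal.aleph0 * (ξ + 1 : Ordinal).card := by rw [Ordinal.card_add]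
  _ ≤ Cardinal.aleph0 := this
  _ < Cardinal.aleph 1 := Cardinal.aleph0_lt_aleph_one

/-! ### the coherent family on `ω₁` and its nontriviality -/

variable {A : Type*} [AddCommGroup A]

/-- the `A`-valued coherent family coding the injections `E` -/
def Phi (a : A) : Ordinal.{0} → Ordinal.{0} → A := fun β α =>
  if α % Ordinal.omega0 = ((E β (α / Ordinal.omega0) : ℕ) : Ordinal) then a else 0

lemma Phi_coherent (a : A) {β γ : Ordinal.{0}} (hβγ : β ≤ γ) (hγ : γ < o1) :
    {α : Ordinal.{0} | α < β ∧ Phi a γ α ≠ Phi a β α}.Finite := by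
  classical
  have hF : {ξ | ξ < β ∧ E γ ξ ≠ E β ξ}.Finite := E_coh hβγ hγ
  apply Set.Finite.subset (Set.Finite.union
    (hF.image (fun ξ => Ordinal.omega0 * ξ + (E γ ξ : ℕ)))
    (hF.image (fun ξ => Ordinal.omega0 * ξ + (E β ξ : ℕ))))
  rintro α ⟨hαβ, hne⟩
  have hξβ : α / Ordinal.omega0 < β := lt_of_le_of_lt (div_omega_le α) hαβ
  set ξ := α / Ordinal.omega0 with hξ
  have hEne : E γ ξ ≠ E β ξ := by
    intro hc
    apply hne
    unfold Phi
    rw [hc]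
  have hcases : α % Ordinal.omega0 = ((E γ ξ : ℕ) : Ordinal) ∨
      α % Ordinal.omega0 = ((E β ξ : ℕ) : Ordinal) := by
    by_contra hc
    push_neg at hc
    apply hne
    unfold Phi
    rw [if_neg hc.1, if_neg hc.2]
  have hα : Ordinal.omega0 * ξ + α % Ordinal.omega0 = α := Ordinal.div_add_mod α _
  rcases hcases with hcase | hcase
  · left
    exact ⟨ξ, ⟨hξβ, hEne⟩, by dsimp only; rw [← hcase]; exact hα⟩
  · right
    exact ⟨ξ, ⟨hξβ, hEne⟩, by dsimp only; rw [← hcase]; exact hα⟩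

lemma Phi_nontrivial {a : A} (ha : a ≠ 0) :
    ¬ ∃ f : Ordinal.{0} → A, ∀ β, β < o1 →
      {α : Ordinal.{0} | α < β ∧ f α ≠ Phi a β α}.Finite := by
  classical
  rintro ⟨f, hf⟩
  -- the decoded set and the difference sets
  set Y : Ordinal.{0} → Set Ordinal.{0} :=
    fun β => {α | α % Ordinal.omega0 = ((E β (α / Ordinal.omega0) : ℕ) : Ordinal)} with hY
  have hPhiY : ∀ β α, α ∈ Y β → Phi a β α = a := by
    intro β α h
    exact if_pos h
  have hPhiY' : ∀ β α, α ∉ Y β → Phi a β α = 0 := by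
    intro β α h
    exact if_neg h
  set D : Ordinal.{0} → Set Ordinal.{0} :=
    fun β => {α | α < β ∧ ((f α = a ∧ α ∉ Y β) ∨ (f α ≠ a ∧ α ∈ Y β))} with hD
  have hDfin : ∀ β, β < o1 → (D β).Finite := by
    intro β hβ
    apply (hf β hβ).subset
    rintro α ⟨hαβ, hcase⟩
    refine ⟨hαβ, ?_⟩
    rcases hcase with ⟨h1, h2⟩ | ⟨h1, h2⟩
    · rw [hPhiY' β α h2, h1]
      exact ha
    · rw [hPhiY β α h2]
      exact h1
  have hDsub : ∀ β, D β ⊆ Set.Iio β := fun β α h => h.1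
  -- a uniform bound below which all difference sets on an uncountable set live
  have hunif : ∃ μ, μ < o1 ∧ ¬ {β | β < o1 ∧ D β ⊆ Set.Iio μ}.Countable := by
    by_contra hc
    push_neg at hc
    have hBnd : ∀ μ, μ < o1 → ∃ ν, ν < o1 ∧ ∀ β, β < o1 → D β ⊆ Set.Iio μ → β < ν := by
      intro μ hμ
      obtain ⟨ν, hν1, hν2⟩ := bdd_of_countable (fun β hβ => hβ.1) (hc μ hμ)
      exact ⟨ν, hν1, fun β h1 h2 => hν2 β ⟨h1, h2⟩⟩
    choose! Bnd hBnd1 hBnd2 using hBnd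
    set c : ℕ → Ordinal.{0} := fun k => Nat.rec 0 (fun _ ck => max (ck + 1) (Bnd ck)) k with hc'
    have hc0 : c 0 = 0 := rfl
    have hcs : ∀ k, c (k + 1) = max (c k + 1) (Bnd (c k)) := fun k => rfl
    have hclt : ∀ k, c k < o1 := by
      intro k
      induction k with
      | zero => exact o1_isLimit.pos
      | succ m ihm =>
        rw [hcs]
        apply max_lt
        · rw [Ordinal.add_one_eq_succ]; exact o1_isLimit.succ_lt ihm
        · exact hBnd1 (c m) ihm
    have hcmono : StrictMono c := by
      apply strictMono_nat_of_lt_succ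
      intro k
      rw [hcs]
      exact lt_of_lt_of_le (lt_add_one _) (le_max_left _ _)
    set β' : Ordinal.{0} := ⨆ k, c k with hβ'
    have hβ'lt : β' < o1 := by
      apply Ordinal.iSup_lt_ord _ hclt
      rw [show o1.cof = Cardinal.aleph 1 from Cardinal.isRegular_aleph_one.cof_eq,
        Cardinal.mk_nat]
      exact Cardinal.aleph0_lt_aleph_one
    have hcof : ∀ x, x < β' → ∃ k, x < c k := by
      intro x hx
      by_contra hcon
      push_neg at hcon
      exact absurd (Ordinal.iSup_le hcon) (not_le.2 hx)
    have hcβ' : ∀ k, c k < β' := by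
      intro k
      exact lt_of_lt_of_le (hcmono (Nat.lt_succ_self k)) (Ordinal.le_iSup c (k + 1))
    -- find a single k bounding the finite set D β'
    have hDβ' : ∃ k, D β' ⊆ Set.Iio (c k) := by
      have hfin := hDfin β' hβ'lt
      have hx : ∀ x, x ∈ D β' → ∃ k, x < c k := fun x hx => hcof x (hDsub β' hx)
      choose! kf hkf using hx
      obtain ⟨k, hk⟩ := (hfin.image kf).bddAbove
      refine ⟨k + 1, ?_⟩
      intro x hxD
      have h1 : kf x ≤ k := hk ⟨x, hxD, rfl⟩
      exact lt_of_lt_of_le (hkf x hxD)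
        (hcmono.monotone (Nat.le_succ_of_le h1))
    obtain ⟨k, hk⟩ := hDβ'
    have : β' < Bnd (c k) := hBnd2 (c k) (hclt k) β' hβ'lt hk
    have h2 : Bnd (c k) ≤ c (k + 1) := by rw [hcs]; exact le_max_right _ _
    exact absurd ((this.trans_le h2).trans (hcβ' (k + 1))) (lt_irrefl β')
  obtain ⟨μ₀, hμ₀, hS⟩ := hunif
  -- pigeonhole: constant difference set on an uncountable set
  obtain ⟨Δ₀, hΔ₀C, hB₀⟩ := uncountable_fiber (V := Set Ordinal.{0}) (F := D)
    (C := {t : Set Ordinal.{0} | t.Finite ∧ t ⊆ Set.Iio μ₀}) hS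
    (Set.countable_setOf_finite_subset (countable_Iio hμ₀))
    (fun β hβ => ⟨hDfin β hβ.1, hβ.2⟩)
  set B := {β | (β < o1 ∧ D β ⊆ Set.Iio μ₀) ∧ D β = Δ₀} with hBdef
  have hBunc : ¬ B.Countable := by
    intro hc
    apply hB₀
    apply hc.mono
    rintro β ⟨h1, h2⟩
    exact ⟨h1, h2⟩
  have hBsub : B ⊆ Set.Iio o1 := fun β h => h.1.1
  have hBD : ∀ β ∈ B, D β = Δ₀ := fun β h => h.2
  have hΔfin : Δ₀.Finite := hΔ₀C.1
  -- the key agreement property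
  set Pbad : Set Ordinal.{0} := (fun α => α / Ordinal.omega0) '' Δ₀ with hPbad
  have hPbadfin : Pbad.Finite := hΔfin.image _
  have hagree : ∀ ξ, ξ ∉ Pbad → ∀ β γ, β ∈ B → γ ∈ B →
      Ordinal.omega0 * (ξ + 1) ≤ β → Ordinal.omega0 * (ξ + 1) ≤ γ → E β ξ = E γ ξ := by
    have key : ∀ ξ, ξ ∉ Pbad → ∀ β γ, β ∈ B → γ ∈ B →
        Ordinal.omega0 * (ξ + 1) ≤ β → Ordinal.omega0 * (ξ + 1) ≤ γ →
        E β ξ ≠ E γ ξ → False := by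
      intro ξ hξP β γ hβB hγB hβ hγ hne
      set α : Ordinal.{0} := Ordinal.omega0 * ξ + (E β ξ : ℕ) with hα
      have hαβ : α < β := lt_of_lt_of_le (block_lt ξ _) hβ
      have hαγ : α < γ := lt_of_lt_of_le (block_lt ξ _) hγ
      have hαY : α ∈ Y β := by
        show α % Ordinal.omega0 = ((E β (α / Ordinal.omega0) : ℕ) : Ordinal)
        rw [hα, block_mod, block_div]
      have hαY' : α ∉ Y γ := by
        show ¬ (α % Ordinal.omega0 = ((E γ (α / Ordinal.omega0) : ℕ) : Ordinal))
        rw [hα, block_mod, block_div]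
        intro hc
        exact hne (Nat.cast_injective hc)
      have hαΔ : α ∉ Δ₀ := by
        intro hc
        apply hξP
        exact ⟨α, hc, by dsimp only; rw [hα, block_div]⟩
      have hXiff : ∀ δ, δ ∈ B → α < δ → (f α = a ↔ α ∈ Y δ) := by
        intro δ hδB hαδ
        have hDδ : α ∉ D δ := by rw [hBD δ hδB]; exact hαΔ
        constructor
        · intro h1
          by_contra h2
          exact hDδ ⟨hαδ, Or.inl ⟨h1, h2⟩⟩
        · intro h2
          by_contra h1
          exact hDδ ⟨hαδ, Or.inr ⟨h1, h2⟩⟩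
      have h1 : f α = a := (hXiff β hβB hαβ).2 hαY
      exact hαY' ((hXiff γ hγB hαγ).1 h1)
    intro ξ hξP β γ hβB hγB hβ hγ
    by_contra hne
    exact key ξ hξP β γ hβB hγB hβ hγ hne
  -- selection of levels
  have hBsel : ∀ x, x < o1 → ∃ β ∈ B, x < β := unbounded_of_not_countable hBsub hBunc
  -- the resulting injection of an uncountable set into ℕ
  set U : Set Ordinal.{0} := Set.Iio o1 \ Pbad with hU
  have hUunc : ¬ U.Countable := by
    intro hc
    exact not_countable_Iio_o1 ((hc.union hPbadfin.countable).mono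
      (fun x hx => by
        by_cases hxP : x ∈ Pbad
        · exact Set.mem_union_right _ hxP
        · exact Set.mem_union_left _ ⟨hx, hxP⟩))
  have hsel : ∀ ξ ∈ U, ∃ β ∈ B, Ordinal.omega0 * (ξ + 1) < β := by
    intro ξ hξ
    exact hBsel _ (block_succ_lt_o1 hξ.1)
  choose! bsel hbsel1 hbsel2 using hsel
  have hginj : Set.InjOn (fun ξ => E (bsel ξ) ξ) U := by
    intro ξ hξ ξ' hξ' heq
    by_contra hne
    obtain ⟨γ, hγB, hγ⟩ := hBsel (max (Ordinal.omega0 * (ξ + 1)) (Ordinal.omega0 * (ξ' + 1)))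
      (max_lt (block_succ_lt_o1 hξ.1) (block_succ_lt_o1 hξ'.1))
    have e1 : E (bsel ξ) ξ = E γ ξ := hagree ξ hξ.2 (bsel ξ) γ (hbsel1 ξ hξ) hγB
      (le_of_lt (hbsel2 ξ hξ)) (le_of_lt (lt_of_le_of_lt (le_max_left _ _) hγ))
    have e2 : E (bsel ξ') ξ' = E γ ξ' := hagree ξ' hξ'.2 (bsel ξ') γ (hbsel1 ξ' hξ') hγB
      (le_of_lt (hbsel2 ξ' hξ')) (le_of_lt (lt_of_le_of_lt (le_max_right _ _) hγ))
    have hγo1 : γ < o1 := hBsub hγB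
    have hξγ : ξ < γ := by
      apply lt_of_le_of_lt _ (lt_of_le_of_lt (le_max_left _ _) hγ)
      calc ξ ≤ Ordinal.omega0 * ξ := Ordinal.le_mul_right ξ Ordinal.omega0_pos
      _ ≤ Ordinal.omega0 * (ξ + 1) := mul_le_mul_right (le_of_lt (lt_add_one ξ)) _
    have hξ'γ : ξ' < γ := by
      apply lt_of_le_of_lt _ (lt_of_le_of_lt (le_max_right _ _) hγ)
      calc ξ' ≤ Ordinal.omega0 * ξ' := Ordinal.le_mul_right ξ' Ordinal.omega0_pos
      _ ≤ Ordinal.omega0 * (ξ' + 1) := mul_le_mul_right (le_of_lt (lt_add_one ξ')) _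
    have hEγinj := (E_good γ hγo1).1
    rcases lt_or_gt_of_ne hne with h | h
    · exact hEγinj ξ ξ' h hξ'γ (by rw [← e1, ← e2]; exact heq)
    · exact hEγinj ξ' ξ h hξγ (by rw [← e1, ← e2]; exact heq.symm)
  exact hUunc (Set.countable_iff_exists_injOn.2 ⟨_, hginj⟩)

end S10

/-- Core: a nontrivial coherent family on `ω₁`. -/
lemma exists_core (A : Type*) [AddCommGroup A] (hA : ∃ a : A, a ≠ 0) :
    ∃ Ψ : Ordinal → Ordinal → A,
      CoherentFam (Cardinal.aleph 1).ord Ψ ∧ ¬TrivialFam (Cardinal.aleph 1).ord Ψ := by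
  obtain ⟨a, ha⟩ := hA
  refine ⟨S10.Phi a, ?_, ?_⟩
  · intro β γ hβγ hγ
    exact S10.Phi_coherent a hβγ hγ
  · rintro ⟨f, hf⟩
    exact S10.Phi_nontrivial ha ⟨f, hf⟩

/-- Corollary: for any ordinal `δ` of cofinality `ω₁` and any nontrivial abelian group `A`
there is a nontrivial coherent family of `A`-valued functions of height `δ`. -/
theorem statement10 (δ : Ordinal) (hδ : Ordinal.cof δ = Cardinal.aleph 1)
    (A : Type*) [AddCommGroup A] (hA : ∃ a : A, a ≠ 0) :
    ∃ Φ : Ordinal → Ordinal → A, CoherentFam δ Φ ∧ ¬TrivialFam δ Φ := by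
  classical
  obtain ⟨Ψ, hΨc, hΨnt⟩ := exists_core A hA
  set c : Ordinal := δ.cof.ord with hc
  have hoc : c = (Cardinal.aleph 1).ord := by rw [hc, hδ]
  rw [← hoc] at hΨc hΨnt
  obtain ⟨f, hf⟩ := Ordinal.exists_fundamental_sequence δ
  -- the cofinal strictly monotone map
  let g : Ordinal → Ordinal := fun ξ => if h : ξ < c then f ξ h else 0
  have hg : ∀ {ξ} (h : ξ < c), g ξ = f ξ h := by
    intro ξ h; simp only [g, dif_pos h]
  have gmono : ∀ {ξ ξ'}, ξ < ξ' → ξ' < c → g ξ < g ξ' := by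
    intro ξ ξ' hlt h'
    rw [hg (hlt.trans h'), hg h']
    exact hf.strict_mono _ _ hlt
  have glt : ∀ {ξ}, ξ < c → g ξ < δ := by
    intro ξ h; rw [hg h]; exact hf.lt h
  have gcof : ∀ {β}, β < δ → ∃ ξ, ξ < c ∧ β ≤ g ξ := by
    intro β hβ
    have : β < blsub c f := by rw [hf.blsub_eq]; exact hβ
    obtain ⟨i, hi, hle⟩ := lt_blsub_iff.1 this
    exact ⟨i, hi, by rw [hg hi]; exact hle⟩
  -- the "inverse" maps
  let I : Ordinal → Ordinal := fun β => sInf {ξ | ξ < c ∧ β ≤ g ξ}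
  have hIne : ∀ {β}, β < δ → {ξ | ξ < c ∧ β ≤ g ξ}.Nonempty := by
    intro β hβ; obtain ⟨ξ, h1, h2⟩ := gcof hβ; exact ⟨ξ, h1, h2⟩
  have hImem : ∀ {β}, β < δ → I β < c ∧ β ≤ g (I β) := fun hβ => csInf_mem (hIne hβ)
  have hImono : ∀ {β γ}, β ≤ γ → γ < δ → I β ≤ I γ := by
    intro β γ hβγ hγ
    exact csInf_le_csInf (OrderBot.bddBelow _) (hIne hγ)
      (fun ξ hξ => ⟨hξ.1, hβγ.trans hξ.2⟩)
  have hIlt : ∀ {ξ β}, ξ < c → β < δ → g ξ < β → ξ < I β := by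
    intro ξ β hξ hβ hgβ
    by_contra hle
    push_neg at hle
    rcases eq_or_lt_of_le hle with h | h
    · exact absurd ((h ▸ (hImem hβ).2).trans_lt hgβ) (lt_irrefl _)
    · exact absurd (((hImem hβ).2.trans (gmono h hξ).le).trans_lt hgβ) (lt_irrefl _)
  let gi : Ordinal → Ordinal := fun α => sInf {ξ | ξ < c ∧ g ξ = α}
  have hgi : ∀ {ξ}, ξ < c → gi (g ξ) = ξ := by
    intro ξ hξ
    have : {ξ' | ξ' < c ∧ g ξ' = g ξ} = {ξ} := by
      ext ξ'
      simp only [mem_setOf_eq, mem_singleton_iff]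
      constructor
      · rintro ⟨h1, h2⟩
        rcases lt_trichotomy ξ' ξ with h | h | h
        · exact absurd h2 (gmono h hξ).ne
        · exact h
        · exact absurd h2.symm (gmono h h1).ne
      · rintro rfl; exact ⟨hξ, rfl⟩
    simp only [gi, this, csInf_singleton]
  have hIg : ∀ {ζ}, ζ < c → I (g ζ) = ζ := by
    intro ζ hζ
    refine le_antisymm (csInf_le (OrderBot.bddBelow _) ⟨hζ, le_rfl⟩) (le_csInf ⟨ζ, hζ, le_rfl⟩ ?_)
    intro ξ hξ
    by_contra hlt
    push_neg at hlt
    exact absurd (hξ.2.trans_lt (gmono hlt hζ)) (lt_irrefl _)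
  -- the transferred family
  refine ⟨fun β α => if h : ∃ ξ, ξ < c ∧ g ξ = α then Ψ (I β) (gi α) else 0, ?_, ?_⟩
  · -- coherence
    intro β γ hβγ hγδ
    have hβδ : β < δ := lt_of_le_of_lt hβγ hγδ
    have hfin := hΨc (I β) (I γ) (hImono hβγ hγδ) (hImem hγδ).1
    refine (hfin.image g).subset ?_
    rintro α ⟨hαβ, hne⟩
    by_cases h : ∃ ξ, ξ < c ∧ g ξ = α
    · obtain ⟨ξ, hξc, hgξ⟩ := h
      subst hgξ
      have hcond : ∃ ξ', ξ' < c ∧ g ξ' = g ξ := ⟨ξ, hξc, rfl⟩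
      simp only [dif_pos hcond, hgi hξc] at hne
      simp only [Set.mem_image, Set.mem_setOf_eq]
      exact ⟨ξ, ⟨hIlt hξc hβδ hαβ, hne⟩, rfl⟩
    · simp only [dif_neg h] at hne
      exact absurd rfl hne
  · -- nontriviality
    rintro ⟨h, hh⟩
    refine hΨnt ⟨fun ξ => h (g ξ), ?_⟩
    intro ζ hζc
    have hβδ : g ζ < δ := glt hζc
    have hE := hh (g ζ) hβδ
    refine (hE.image gi).subset ?_
    rintro ξ ⟨hξζ, hne⟩
    have hξc : ξ < c := hξζ.trans hζc
    have hα : g ξ < g ζ := gmono hξζ hζc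
    have hcond : ∃ ξ', ξ' < c ∧ g ξ' = g ξ := ⟨ξ, hξc, rfl⟩
    simp only [Set.mem_image, Set.mem_setOf_eq]
    refine ⟨g ξ, ⟨hα, ?_⟩, hgi hξc⟩
    simp only [dif_pos hcond, hgi hξc, hIg hζc]
    exact hne
end
end

section
/- For any abelian group A, any positive integer n, and any ordinal δ of cofinality less than ℵ_n (including δ a successor ordinal), every n-coherent A-valued family of height δ is n-trivial. -/
noncomputable section
open Ordinal Set

/-- The alternating sum `Σ_{i ≤ n} (-1)^i Ψ (β^i) (ξ)`, where `β^i` is the tuple `β` with its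
`i`-th coordinate deleted. -/
def altSum {A : Type*} [AddCommGroup A] {n : ℕ}
    (Ψ : (Fin n → Ordinal.{0}) → Ordinal.{0} → A) (β : Fin (n + 1) → Ordinal.{0})
    (ξ : Ordinal.{0}) : A :=
  ∑ i : Fin (n + 1), ((-1 : ℤ) ^ (i : ℕ)) • Ψ (β ∘ i.succAbove) ξ

/-- `Φ` codes an `n`-coherent `A`-valued family of height `δ`: writing `φ_β̄ = Φ β̄` (a
function read on `Iio (β̄ 0)`) for increasing `n`-tuples `β̄` from `δ`, one has
`Σ_{i ≤ n} (-1)^i φ_{β̄^i} =* 0` (i.e. at all but finitely many arguments) for every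
increasing `(n+1)`-tuple `β̄` from `δ`.  For `n = 0`, `Φ` codes a single function which is
required to have finite support below every `α < δ`. -/
def NCoherent {A : Type*} [AddCommGroup A] {n : ℕ} (δ : Ordinal.{0})
    (Φ : (Fin n → Ordinal.{0}) → Ordinal.{0} → A) : Prop :=
  ∀ β : Fin (n + 1) → Ordinal, StrictMono β → (∀ i, β i < δ) →
    {ξ : Ordinal | ξ < β 0 ∧ altSum Φ β ξ ≠ 0}.Finite

/-- `Ψ` is an `(n+1)`-trivialization of the `(n+1)`-dimensional family `Φ` of height `δ`:
`Σ_{i ≤ n} (-1)^i ψ_{β̄^i} =* φ_β̄` for every increasing `(n+1)`-tuple `β̄` from `δ`.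
For `n = 0` this says exactly that the single function `ψ = Ψ ∅` satisfies
`ψ ↾ β =* φ_β` for all `β < δ`. -/
def IsNTrivialization {A : Type*} [AddCommGroup A] {n : ℕ} (δ : Ordinal.{0})
    (Φ : (Fin (n + 1) → Ordinal.{0}) → Ordinal.{0} → A)
    (Ψ : (Fin n → Ordinal.{0}) → Ordinal.{0} → A) : Prop :=
  ∀ β : Fin (n + 1) → Ordinal, StrictMono β → (∀ i, β i < δ) →
    {ξ : Ordinal | ξ < β 0 ∧ altSum Ψ β ξ ≠ Φ β ξ}.Finite

/-- `n`-triviality of an `n`-dimensional family of height `δ`: for `n = 0`, finite support;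
for `n ≥ 1`, the existence of an `n`-trivialization. -/
def NTrivial {A : Type*} [AddCommGroup A] :
    ∀ {n : ℕ}, Ordinal.{0} → ((Fin n → Ordinal.{0}) → Ordinal.{0} → A) → Prop
  | 0, δ, Φ => {ξ : Ordinal | ξ < δ ∧ Φ Fin.elim0 ξ ≠ 0}.Finite
  | _ + 1, δ, Φ => ∃ Ψ, IsNTrivialization δ Φ Ψ

namespace GoblotAux
open Cardinal


variable {A : Type*} [AddCommGroup A]

/-- `F` is "small below `c`": at every strictly increasing tuple with entries `< c`,
`F` vanishes at all but finitely many arguments below the first entry. -/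
def Sm {p : ℕ} (c : Ordinal.{0}) (F : (Fin (p + 1) → Ordinal.{0}) → Ordinal.{0} → A) : Prop :=
  ∀ β : Fin (p + 1) → Ordinal, StrictMono β → (∀ i, β i < c) →
    {ξ : Ordinal | ξ < β 0 ∧ F β ξ ≠ 0}.Finite

namespace Sm

theorem mono {p : ℕ} {c c' : Ordinal} {F : (Fin (p + 1) → Ordinal) → Ordinal → A}
    (h : Sm c F) (hcc : c' ≤ c) : Sm c' F :=
  fun β hβ hβc => h β hβ fun i => (hβc i).trans_le hcc

theorem congr' {p : ℕ} {c : Ordinal} {F G : (Fin (p + 1) → Ordinal) → Ordinal → A}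
    (h : Sm c F) (hFG : ∀ β, StrictMono β → (∀ i, β i < c) → ∀ ξ, ξ < β 0 → F β ξ = G β ξ) :
    Sm c G := fun β hβ hβc =>
  (h β hβ hβc).subset fun ξ hξ => ⟨hξ.1, fun h0 => hξ.2 (by rw [← hFG β hβ hβc ξ hξ.1]; exact h0)⟩

theorem zero {p : ℕ} {c : Ordinal} : Sm (A := A) (p := p) c 0 := fun β _ _ => by
  convert Set.finite_empty using 1
  ext ξ; simp

theorem add {p : ℕ} {c : Ordinal} {F G : (Fin (p + 1) → Ordinal) → Ordinal → A}
    (hF : Sm c F) (hG : Sm c G) : Sm c (F + G) := by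
  intro β hβ hβc
  apply ((hF β hβ hβc).union (hG β hβ hβc)).subset
  rintro ξ ⟨h1, h2⟩
  by_cases hF0 : F β ξ = 0
  · exact Or.inr ⟨h1, fun hG0 => h2 (by show F β ξ + G β ξ = 0; rw [hF0, hG0, add_zero])⟩
  · exact Or.inl ⟨h1, hF0⟩

theorem neg {p : ℕ} {c : Ordinal} {F : (Fin (p + 1) → Ordinal) → Ordinal → A}
    (hF : Sm c F) : Sm c (-F) := by
  intro β hβ hβc
  apply (hF β hβ hβc).subset
  rintro ξ ⟨h1, h2⟩
  exact ⟨h1, fun h0 => h2 (by show -F β ξ = 0; rw [h0, neg_zero])⟩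

theorem sub {p : ℕ} {c : Ordinal} {F G : (Fin (p + 1) → Ordinal) → Ordinal → A}
    (hF : Sm c F) (hG : Sm c G) : Sm c (F - G) :=
  (hF.add hG.neg).congr' fun β _ _ ξ _ => by
    show F β ξ + (-G) β ξ = (F - G) β ξ
    simp [sub_eq_add_neg]

theorem zsmul {p : ℕ} {c : Ordinal} {F : (Fin (p + 1) → Ordinal) → Ordinal → A}
    (hF : Sm c F) (k : ℤ) : Sm c (fun β ξ => k • F β ξ) := by
  intro β hβ hβc
  apply (hF β hβ hβc).subset
  rintro ξ ⟨h1, h2⟩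
  exact ⟨h1, fun h0 => h2 (by show k • F β ξ = 0; rw [h0, smul_zero])⟩

end Sm

theorem altSum_congr_at {p : ℕ} {F G : (Fin p → Ordinal) → Ordinal → A}
    (β : Fin (p + 1) → Ordinal) (ξ : Ordinal)
    (h : ∀ i : Fin (p + 1), F (β ∘ i.succAbove) ξ = G (β ∘ i.succAbove) ξ) :
    altSum F β ξ = altSum G β ξ := by
  unfold altSum
  exact Finset.sum_congr rfl fun i _ => by rw [h i]

theorem altSum_congr {p : ℕ} {F G : (Fin p → Ordinal) → Ordinal → A}
    (h : ∀ t ξ, F t ξ = G t ξ) (β : Fin (p + 1) → Ordinal) (ξ : Ordinal) :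
    altSum F β ξ = altSum G β ξ := by
  unfold altSum
  exact Finset.sum_congr rfl fun i _ => by rw [h]

theorem altSum_add {p : ℕ} (F G : (Fin p → Ordinal) → Ordinal → A)
    (β : Fin (p + 1) → Ordinal) (ξ : Ordinal) :
    altSum (F + G) β ξ = altSum F β ξ + altSum G β ξ := by
  unfold altSum
  rw [← Finset.sum_add_distrib]
  exact Finset.sum_congr rfl fun i _ => by
    show _ • (F _ ξ + G _ ξ) = _
    rw [smul_add]

theorem altSum_sub {p : ℕ} (F G : (Fin p → Ordinal) → Ordinal → A)
    (β : Fin (p + 1) → Ordinal) (ξ : Ordinal) :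
    altSum (F - G) β ξ = altSum F β ξ - altSum G β ξ := by
  unfold altSum
  rw [← Finset.sum_sub_distrib]
  exact Finset.sum_congr rfl fun i _ => by
    show _ • (F _ ξ - G _ ξ) = _
    rw [smul_sub]

theorem altSum_zsmul {p : ℕ} (k : ℤ) (F : (Fin p → Ordinal) → Ordinal → A)
    (β : Fin (p + 1) → Ordinal) (ξ : Ordinal) :
    altSum (fun t ξ' => k • F t ξ') β ξ = k • altSum F β ξ := by
  unfold altSum
  rw [Finset.smul_sum]
  exact Finset.sum_congr rfl fun i _ => by rw [smul_comm]

theorem Sm.altSum' {p : ℕ} {c : Ordinal} {F : (Fin (p + 1) → Ordinal) → Ordinal → A}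
    (h : Sm c F) : Sm c (altSum F) := by
  intro β hβ hβc
  apply Set.Finite.subset (Set.finite_iUnion fun i : Fin (p + 2) =>
    h (β ∘ i.succAbove) (hβ.comp (Fin.strictMono_succAbove i)) fun j => hβc _)
  rintro ξ ⟨hξ0, hne⟩
  rw [Set.mem_iUnion]
  by_contra hc
  push_neg at hc
  apply hne
  apply Finset.sum_eq_zero
  intro i _
  have hi := hc i
  simp only [Set.mem_setOf_eq, not_and, not_not] at hi
  rw [hi (hξ0.trans_le (hβ.monotone (Fin.zero_le _))), smul_zero]



variable {A : Type*} [AddCommGroup A]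

theorem val_succAbove {n : ℕ} (p : Fin (n + 1)) (i : Fin n) :
    ((p.succAbove i : Fin (n + 1)) : ℕ) =
      if (i : ℕ) < (p : ℕ) then (i : ℕ) else (i : ℕ) + 1 := by
  rcases lt_or_ge (Fin.castSucc i) p with h | h
  · rw [Fin.succAbove_of_castSucc_lt _ _ h, if_pos]
    · rfl
    · simpa [Fin.lt_iff_val_lt_val] using h
  · rw [Fin.succAbove_of_le_castSucc _ _ h, if_neg]
    · rfl
    · have : (p : ℕ) ≤ (i : ℕ) := by simpa [Fin.le_iff_val_le_val] using h
      omega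

theorem succAbove_swap {n : ℕ} (i : Fin (n + 2)) (j : Fin (n + 1))
    (hij : (i : ℕ) ≤ (j : ℕ)) (hi : i ≠ Fin.last (n + 1)) (x : Fin n) :
    i.succAbove (j.succAbove x) = (j.succ).succAbove ((i.castPred hi).succAbove x) := by
  apply Fin.ext
  simp only [val_succAbove, Fin.val_succ, Fin.coe_castPred]
  grind

/-- The composite of two alternating sums vanishes (d² = 0). -/
theorem altSum_altSum {p : ℕ} (F : (Fin p → Ordinal) → Ordinal → A)
    (β : Fin (p + 2) → Ordinal) (ξ : Ordinal) : altSum (altSum F) β ξ = 0 := by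
  unfold altSum
  have step : ∀ i : Fin (p + 2),
      ((-1 : ℤ) ^ (i : ℕ)) • ∑ j : Fin (p + 1),
          ((-1 : ℤ) ^ (j : ℕ)) • F ((β ∘ i.succAbove) ∘ j.succAbove) ξ
      = ∑ j : Fin (p + 1), ((-1 : ℤ) ^ ((i : ℕ) + (j : ℕ))) •
          F (β ∘ (i.succAbove ∘ j.succAbove)) ξ := by
    intro i
    rw [Finset.smul_sum]
    exact Finset.sum_congr rfl fun j _ => by rw [smul_smul, ← pow_add]; rfl
  rw [Finset.sum_congr rfl fun i _ => step i, ← Finset.sum_product']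
  have hglast : ∀ (i : Fin (p+2)) (j : Fin (p+1)), ¬ ((j : ℕ) < (i : ℕ)) → i ≠ Fin.last (p+1) := by
    intro i j h hlast
    apply h
    rw [hlast, Fin.val_last]
    exact j.isLt
  have hgzero : ∀ (i : Fin (p+2)) (j : Fin (p+1)), ((j : ℕ) < (i : ℕ)) → i ≠ 0 := by
    intro i j h h0
    rw [h0] at h
    simp at h
  set g : Fin (p + 2) × Fin (p + 1) → Fin (p + 2) × Fin (p + 1) := fun a =>
    if h : (a.2 : ℕ) < (a.1 : ℕ)
    then (a.2.castSucc, a.1.pred (hgzero a.1 a.2 h))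
    else (a.2.succ, a.1.castPred (hglast a.1 a.2 h)) with hg
  have hcompeq : ∀ a : Fin (p + 2) × Fin (p + 1),
      β ∘ ((g a).1.succAbove ∘ (g a).2.succAbove) = β ∘ (a.1.succAbove ∘ a.2.succAbove) := by
    rintro ⟨i, j⟩
    funext x
    apply congrArg β
    by_cases h : (j : ℕ) < (i : ℕ)
    · rw [hg]
      simp only [h, dif_pos]
      apply Fin.ext
      simp only [Function.comp_apply, val_succAbove, Fin.coe_castSucc, Fin.coe_pred]
      split_ifs <;> omega
    · rw [hg]
      simp only [h, dif_neg, not_false_iff]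
      apply Fin.ext
      simp only [Function.comp_apply, val_succAbove, Fin.val_succ, Fin.coe_castPred]
      grind
  have hexp : ∀ a : Fin (p + 2) × Fin (p + 1),
      (((g a).1 : ℕ) + ((g a).2 : ℕ) = ((a.1 : ℕ) + (a.2 : ℕ)) + 1) ∨
      (((a.1 : ℕ) + (a.2 : ℕ)) = (((g a).1 : ℕ) + ((g a).2 : ℕ)) + 1) := by
    rintro ⟨i, j⟩
    by_cases h : (j : ℕ) < (i : ℕ)
    · right; rw [hg]; simp only [h, dif_pos, Fin.coe_castSucc, Fin.coe_pred]; omega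
    · left; rw [hg]; simp only [h, dif_neg, not_false_iff, Fin.val_succ, Fin.coe_castPred]; omega
  apply Finset.sum_ninvolution g
  · intro a
    show ((-1 : ℤ) ^ ((a.1 : ℕ) + (a.2 : ℕ))) • F (β ∘ (a.1.succAbove ∘ a.2.succAbove)) ξ
        + ((-1 : ℤ) ^ (((g a).1 : ℕ) + ((g a).2 : ℕ))) • F (β ∘ ((g a).1.succAbove ∘ (g a).2.succAbove)) ξ = 0
    rw [hcompeq a]
    rcases hexp a with he | he
    · rw [he, pow_succ, mul_neg_one, neg_smul, add_neg_cancel]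
    · rw [he, pow_succ, mul_neg_one, neg_smul, neg_add_cancel]
  · intro a _
    rcases hexp a with he | he <;> (intro hEq; rw [hEq] at he; omega)
  · intro a; exact Finset.mem_product.2 ⟨Finset.mem_univ _, Finset.mem_univ _⟩
  · rintro ⟨i, j⟩
    by_cases h : (j : ℕ) < (i : ℕ)
    · have hg1 : g (i, j) = (j.castSucc, i.pred (hgzero i j h)) := by rw [hg]; simp only [h, dif_pos]
      rw [hg1]
      have h2 : ¬ (((i.pred (hgzero i j h) : Fin (p+1)) : ℕ) < ((j.castSucc : Fin (p+2)) : ℕ)) := by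
        simp only [Fin.coe_castSucc, Fin.coe_pred]; omega
      rw [hg]
      simp only [h2, dif_neg, not_false_iff]
      refine Prod.ext ?_ ?_ <;> apply Fin.ext <;>
        simp only [Fin.val_succ, Fin.coe_pred, Fin.coe_castPred, Fin.coe_castSucc] <;> omega
    · have hg1 : g (i, j) = (j.succ, i.castPred (hglast i j h)) := by
        rw [hg]; simp only [h, dif_neg, not_false_iff]
      rw [hg1]
      have h2 : (((i.castPred (hglast i j h) : Fin (p+1)) : ℕ) < ((j.succ : Fin (p+2)) : ℕ)) := by
        simp only [Fin.val_succ, Fin.coe_castPred]; omega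
      rw [hg]
      simp only [h2, dif_pos]
      refine Prod.ext ?_ ?_ <;> apply Fin.ext <;>
        simp only [Fin.val_succ, Fin.coe_pred, Fin.coe_castPred, Fin.coe_castSucc] <;> omega



variable {A : Type*} [AddCommGroup A]

theorem strictMono_snoc {p : ℕ} {t : Fin p → Ordinal} {a : Ordinal}
    (ht : StrictMono t) (hta : ∀ j, t j < a) : StrictMono (Fin.snoc t a) := by
  intro x y hxy
  rcases Fin.eq_castSucc_or_eq_last y with ⟨y', rfl⟩ | rfl
  · rcases Fin.eq_castSucc_or_eq_last x with ⟨x', rfl⟩ | rfl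
    · rw [Fin.snoc_castSucc, Fin.snoc_castSucc]
      exact ht (by exact_mod_cast hxy)
    · exfalso
      have h1 : (Fin.last p : Fin (p+1)) < Fin.castSucc y' := hxy
      rw [Fin.lt_iff_val_lt_val, Fin.val_last, Fin.coe_castSucc] at h1
      have := y'.isLt
      omega
  · rcases Fin.eq_castSucc_or_eq_last x with ⟨x', rfl⟩ | rfl
    · rw [Fin.snoc_castSucc, Fin.snoc_last]
      exact hta x'
    · exact absurd hxy (lt_irrefl _)

theorem snoc_lt {p : ℕ} {t : Fin p → Ordinal} {a c : Ordinal}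
    (hta : ∀ j, t j < c) (hac : a < c) : ∀ j, (Fin.snoc t a : Fin (p+1) → Ordinal) j < c := by
  intro j
  rcases Fin.eq_castSucc_or_eq_last j with ⟨y, rfl⟩ | rfl
  · rw [Fin.snoc_castSucc]; exact hta y
  · rw [Fin.snoc_last]; exact hac

theorem snoc_zero' {p : ℕ} (t : Fin (p + 1) → Ordinal) (a : Ordinal) :
    (Fin.snoc t a : Fin (p + 2) → Ordinal) 0 = t 0 := by
  rw [show (0 : Fin (p + 2)) = Fin.castSucc 0 from rfl, Fin.snoc_castSucc]

theorem snoc_comp_succAbove_castSucc {p : ℕ} (t : Fin (p + 1) → Ordinal) (a : Ordinal)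
    (i : Fin (p + 1)) :
    (Fin.snoc t a : Fin (p + 2) → Ordinal) ∘ (Fin.castSucc i).succAbove
      = Fin.snoc (t ∘ i.succAbove) a := by
  funext x
  rcases Fin.eq_castSucc_or_eq_last x with ⟨y, rfl⟩ | rfl
  · show (Fin.snoc t a : Fin (p + 2) → Ordinal) ((Fin.castSucc i).succAbove (Fin.castSucc y)) = _
    rw [Fin.castSucc_succAbove_castSucc, Fin.snoc_castSucc, Fin.snoc_castSucc]
    rfl
  · show (Fin.snoc t a : Fin (p + 2) → Ordinal) ((Fin.castSucc i).succAbove (Fin.last p)) = _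
    rw [Fin.succAbove_of_le_castSucc _ _ (by
      simp only [Fin.le_iff_val_le_val, Fin.coe_castSucc, Fin.val_last]
      omega), Fin.succ_last, Fin.snoc_last, Fin.snoc_last]

theorem snoc_comp_succAbove_last {p : ℕ} (t : Fin (p + 1) → Ordinal) (a : Ordinal) :
    (Fin.snoc t a : Fin (p + 2) → Ordinal) ∘ (Fin.last (p + 1)).succAbove = t := by
  funext x
  show (Fin.snoc t a : Fin (p + 2) → Ordinal) ((Fin.last (p + 1)).succAbove x) = t x
  rw [Fin.succAbove_last, Fin.snoc_castSucc]

/-- Decomposition of an alternating sum at a `snoc` tuple. -/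
theorem altSum_snoc {q : ℕ} (F : (Fin (q + 1) → Ordinal) → Ordinal → A)
    (t : Fin (q + 1) → Ordinal) (a ξ : Ordinal) :
    altSum F (Fin.snoc t a) ξ
      = altSum (fun s ξ' => F (Fin.snoc s a) ξ') t ξ + ((-1 : ℤ) ^ (q + 1)) • F t ξ := by
  unfold altSum
  rw [Fin.sum_univ_castSucc]
  congr 1
  · apply Finset.sum_congr rfl
    intro i _
    rw [snoc_comp_succAbove_castSucc]
    rw [Fin.coe_castSucc]
  · rw [snoc_comp_succAbove_last]
    simp only [Fin.val_last]



theorem neg_one_pow_smul_eq_zero {A : Type*} [AddCommGroup A] {k : ℕ} {x : A} :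
    ((-1 : ℤ) ^ k) • x = 0 ↔ x = 0 := by
  constructor
  · intro h
    have h2 := congrArg (fun y => ((-1 : ℤ) ^ k) • y) h
    simp only [smul_zero] at h2
    rwa [smul_smul, ← pow_add, Even.neg_one_pow ⟨k, rfl⟩, one_smul] at h2
  · intro h; rw [h, smul_zero]

variable {A : Type*} [AddCommGroup A]

/-- The successor case: a coherent family of height `succ γ` is trivial. -/
theorem case_succ (m : ℕ) (γ : Ordinal) (Φ : (Fin (m + 1) → Ordinal) → Ordinal → A)
    (hΦ : Sm (Order.succ γ) (altSum Φ)) :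
    ∃ Ψ : (Fin m → Ordinal) → Ordinal → A,
      Sm (Order.succ γ) (fun β ξ => altSum Ψ β ξ - Φ β ξ) := by
  classical
  refine ⟨fun t ξ => if (∀ j, t j < γ) then ((-1 : ℤ) ^ (m + 2)) • Φ (Fin.snoc t γ) ξ else 0, ?_⟩
  intro β hβ hβc
  by_cases hb : ∀ j, β j < γ
  · have hβγs : StrictMono (Fin.snoc β γ : Fin (m + 2) → Ordinal) := strictMono_snoc hβ hb
    have hβγb : ∀ i, (Fin.snoc β γ : Fin (m + 2) → Ordinal) i < Order.succ γ :=
      snoc_lt (fun j => (hb j).trans (Order.lt_succ γ)) (Order.lt_succ γ)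
    have hsm := hΦ (Fin.snoc β γ) hβγs hβγb
    have h1 : ∀ ξ, altSum (fun t ξ' =>
        if (∀ j, t j < γ) then ((-1 : ℤ) ^ (m + 2)) • Φ (Fin.snoc t γ) ξ' else 0) β ξ
        = ((-1 : ℤ) ^ (m + 2)) • altSum (fun s ξ' => Φ (Fin.snoc s γ) ξ') β ξ := by
      intro ξ
      unfold altSum
      rw [Finset.smul_sum]
      apply Finset.sum_congr rfl
      intro i _
      show _ • (if (∀ j, (β ∘ i.succAbove) j < γ) then ((-1 : ℤ) ^ (m + 2)) • Φ (Fin.snoc (β ∘ i.succAbove) γ) ξ else 0) = _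
      have hiff : ∀ j, (β ∘ i.succAbove) j < γ := fun j => hb _
      rw [if_pos hiff, smul_comm]
    have hpt : ∀ ξ, altSum (fun t ξ' =>
        if (∀ j, t j < γ) then ((-1 : ℤ) ^ (m + 2)) • Φ (Fin.snoc t γ) ξ' else 0) β ξ - Φ β ξ
        = ((-1 : ℤ) ^ (m + 2)) • altSum Φ (Fin.snoc β γ) ξ := by
      intro ξ
      rw [h1, altSum_snoc Φ β γ ξ, smul_add, smul_smul, ← pow_add,
        show ((-1 : ℤ)) ^ (m + 2 + (m + 1)) = -1 from Odd.neg_one_pow (Nat.odd_iff.mpr (by omega)),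
        neg_one_zsmul]
      abel
    apply hsm.subset
    rintro ξ ⟨hξ, hne⟩
    refine ⟨by rw [snoc_zero']; exact hξ, fun h0 => hne ?_⟩
    show altSum (fun t ξ' => if (∀ j, t j < γ) then ((-1 : ℤ) ^ (m + 2)) • Φ (Fin.snoc t γ) ξ' else 0) β ξ
        - Φ β ξ = 0
    rw [hpt, h0, smul_zero]
  · push_neg at hb
    obtain ⟨j0, hj0⟩ := hb
    have hlast : β (Fin.last m) = γ :=
      le_antisymm (Order.lt_succ_iff.mp (hβc _)) (hj0.trans (hβ.monotone (Fin.le_last j0)))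
    have hzero : ∀ ξ, altSum (fun t ξ' =>
        if (∀ j, t j < γ) then ((-1 : ℤ) ^ (m + 2)) • Φ (Fin.snoc t γ) ξ' else 0) β ξ - Φ β ξ = 0 := by
      intro ξ
      have hsum : altSum (fun t ξ' =>
          if (∀ j, t j < γ) then ((-1 : ℤ) ^ (m + 2)) • Φ (Fin.snoc t γ) ξ' else 0) β ξ
          = ((-1 : ℤ) ^ ((Fin.last m : Fin (m+1)) : ℕ)) •
              (if (∀ j, (β ∘ (Fin.last m).succAbove) j < γ)
               then ((-1 : ℤ) ^ (m + 2)) • Φ (Fin.snoc ((β ∘ (Fin.last m).succAbove)) γ) ξ else 0) := by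
        apply Finset.sum_eq_single_of_mem _ (Finset.mem_univ _)
        intro i _ hi
        have hrange : Fin.last m ∈ Set.range i.succAbove := by
          rw [Fin.range_succAbove]
          simp only [Set.mem_compl_iff, Set.mem_singleton_iff]
          exact fun h => hi h.symm
        obtain ⟨j, hj⟩ := hrange
        show ((-1 : ℤ) ^ (i : ℕ)) • (if (∀ j', (β ∘ i.succAbove) j' < γ)
            then ((-1 : ℤ) ^ (m + 2)) • Φ (Fin.snoc (β ∘ i.succAbove) γ) ξ else 0) = 0
        rw [if_neg, smul_zero]
        intro hall
        have := hall j
        rw [Function.comp_apply, hj, hlast] at this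
        exact lt_irrefl γ this
      rw [hsum, if_pos, Fin.val_last]
      · have hsnoc : (Fin.snoc ((β : Fin (m+1) → Ordinal) ∘ (Fin.last m).succAbove) γ
            : Fin (m+1) → Ordinal) = β := by
          funext x
          rcases Fin.eq_castSucc_or_eq_last x with ⟨y, rfl⟩ | rfl
          · rw [Fin.snoc_castSucc, Function.comp_apply, Fin.succAbove_last_apply]
          · rw [Fin.snoc_last, hlast]
        rw [hsnoc, smul_smul, ← pow_add,
          show m + (m + 2) = 2 * (m + 1) by ring, Even.neg_one_pow (Nat.even_iff.mpr (by omega)), one_smul,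
          _root_.sub_self]
      · intro j
        rw [Function.comp_apply, Fin.succAbove_last_apply, ← hlast]
        exact hβ (Fin.castSucc_lt_last j)
    apply Set.finite_empty.subset
    rintro ξ ⟨_, hne⟩
    exact absurd (hzero ξ) hne


/-- Common setup for limit ordinals: a strictly increasing cofinal sequence. -/
theorem limit_seq (δ : Ordinal.{0}) (hδlim : Order.IsSuccLimit δ) :
    ∃ e : Ordinal.{0} → Ordinal.{0},
      (∀ {ζ ζ'}, ζ < ζ' → ζ' < (Ordinal.cof δ).ord → e ζ < e ζ') ∧
      (∀ {ζ}, ζ < (Ordinal.cof δ).ord → e ζ < δ) ∧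
      (∀ b, b < δ → ∃ ζ, ζ < (Ordinal.cof δ).ord ∧ b < e ζ) := by
  obtain ⟨f, hf⟩ := Ordinal.exists_fundamental_sequence δ
  have hθlim : Order.IsSuccLimit ((Ordinal.cof δ).ord) :=
    Cardinal.isSuccLimit_ord (Ordinal.aleph0_le_cof.2 hδlim)
  classical
  refine ⟨fun ζ => if h : ζ < (Ordinal.cof δ).ord then f ζ h else 0, ?_, ?_, ?_⟩
  · intro ζ ζ' hζζ hζ'
    dsimp only
    rw [dif_pos (hζζ.trans hζ'), dif_pos hζ']
    exact hf.2.1 _ _ hζζ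
  · intro ζ hζ
    dsimp only
    rw [dif_pos hζ]
    rw [← hf.blsub_eq]
    exact Ordinal.lt_blsub f ζ hζ
  · intro b hb
    rw [← hf.blsub_eq] at hb
    obtain ⟨i, hi, hbi⟩ := Ordinal.lt_blsub_iff.mp hb
    refine ⟨Order.succ i, hθlim.succ_lt hi, ?_⟩
    dsimp only
    rw [dif_pos (hθlim.succ_lt hi)]
    exact hbi.trans_lt (hf.2.1 _ _ (Order.lt_succ i))

/-- The base case of Goblot's theorem: 1-coherent families over countable-cofinality limits. -/
theorem case_zero_limit (δ : Ordinal.{0}) (hδlim : Order.IsSuccLimit δ)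
    (hcof : Ordinal.cof δ ≤ Cardinal.aleph0)
    (Φ : (Fin 1 → Ordinal) → Ordinal → A) (hΦ : Sm δ (altSum Φ)) :
    ∃ Ψ : (Fin 0 → Ordinal) → Ordinal → A, Sm δ (fun β ξ => altSum Ψ β ξ - Φ β ξ) := by
  classical
  obtain ⟨e, he_mono, he_lt, he_cof⟩ := limit_seq δ hδlim
  have hθω : (Ordinal.cof δ).ord = Ordinal.omega0 := by
    rw [le_antisymm hcof (Ordinal.aleph0_le_cof.2 hδlim), Cardinal.ord_aleph0]
  have hnatθ : ∀ k : ℕ, ((k : Ordinal)) < (Ordinal.cof δ).ord := by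
    intro k; rw [hθω]; exact Ordinal.nat_lt_omega0 k
  set en : ℕ → Ordinal := fun k => e (k : Ordinal) with hen
  have hen_lt : ∀ k, en k < δ := fun k => he_lt (hnatθ k)
  have hen_mono : ∀ {k k' : ℕ}, k < k' → en k < en k' := by
    intro k k' hk
    exact he_mono (by exact_mod_cast hk) (hnatθ k')
  have hen_cof : ∀ b, b < δ → ∃ k : ℕ, b < en k := by
    intro b hb
    obtain ⟨ζ, hζθ, hζ⟩ := he_cof b hb
    rw [hθω] at hζθ
    obtain ⟨k, rfl⟩ := Ordinal.lt_omega0.mp hζθ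
    exact ⟨k, hζ⟩
  -- the pair coherence instances
  have coh2 : ∀ a b : Ordinal, a < b → b < δ →
      {ξ : Ordinal | ξ < a ∧ Φ (fun _ => b) ξ - Φ (fun _ => a) ξ ≠ 0}.Finite := by
    intro a b hab hbδ
    set v : Fin 2 → Ordinal := fun i => if (i : ℕ) = 0 then a else b with hv
    have hvs : StrictMono v := by
      intro x y hxy
      have hx := x.isLt
      have hy := y.isLt
      have hxy' : (x : ℕ) < (y : ℕ) := hxy
      have hx0 : (x : ℕ) = 0 := by omega
      have hy1 : (y : ℕ) = 1 := by omega
      show (if (x : ℕ) = 0 then a else b) < (if (y : ℕ) = 0 then a else b)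
      rw [if_pos hx0, if_neg (by omega)]
      exact hab
    have hvb : ∀ i, v i < δ := by
      intro i
      show (if (i : ℕ) = 0 then a else b) < δ
      split_ifs
      · exact hab.trans hbδ
      · exact hbδ
    have hfin := hΦ v hvs hvb
    have hv0 : v 0 = a := by
      show (if ((0 : Fin 2) : ℕ) = 0 then a else b) = a
      norm_num
    have hc0 : v ∘ (0 : Fin 2).succAbove = fun _ : Fin 1 => b := by
      funext x
      have hval : (((0 : Fin 2).succAbove x) : ℕ) = 1 := by
        rw [val_succAbove, show ((0 : Fin 2) : ℕ) = 0 from rfl]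
        have := x.isLt
        split_ifs <;> omega
      show (if (((0 : Fin 2).succAbove x) : ℕ) = 0 then a else b) = b
      rw [hval]
      norm_num
    have hc1 : v ∘ (1 : Fin 2).succAbove = fun _ : Fin 1 => a := by
      funext x
      have hval : (((1 : Fin 2).succAbove x) : ℕ) = 0 := by
        rw [val_succAbove, show ((1 : Fin 2) : ℕ) = 1 from rfl]
        have := x.isLt
        split_ifs <;> omega
      show (if (((1 : Fin 2).succAbove x) : ℕ) = 0 then a else b) = a
      rw [hval]
      norm_num
    have hptw : ∀ ξ, altSum Φ v ξ = Φ (fun _ => b) ξ - Φ (fun _ => a) ξ := by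
      intro ξ
      unfold altSum
      rw [Fin.sum_univ_two, hc0, hc1]
      norm_num
      abel
    apply hfin.subset
    rintro ξ ⟨hξ, hne⟩
    exact ⟨by rw [hv0]; exact hξ, by rw [hptw]; exact hne⟩
  -- the diagonal gluing
  refine ⟨fun _ ξ => if h : ∃ k : ℕ, ξ < en k then Φ (fun _ => en (Nat.find h)) ξ else 0, ?_⟩
  intro β hβ hβc
  have hβconst : β = fun _ : Fin 1 => β 0 := funext fun x => by rw [Fin.fin_one_eq_zero x]
  obtain ⟨J, hJ⟩ := hen_cof (β 0) (hβc 0)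
  have hTfin : {ξ : Ordinal | ξ < β 0 ∧ Φ (fun _ => en J) ξ - Φ (fun _ => β 0) ξ ≠ 0}.Finite :=
    coh2 (β 0) (en J) hJ (hen_lt J)
  have hSfin : ∀ j : ℕ, j < J →
      {ξ : Ordinal | ξ < en j ∧ Φ (fun _ => en j) ξ - Φ (fun _ => en J) ξ ≠ 0}.Finite := by
    intro j hj
    apply (coh2 (en j) (en J) (hen_mono hj) (hen_lt J)).subset
    rintro ξ ⟨hξ, hne⟩
    refine ⟨hξ, fun h0 => hne ?_⟩
    rw [← neg_sub, h0, neg_zero]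
  apply Set.Finite.subset (hTfin.union
    ((Finset.range J).finite_toSet.biUnion fun j hj =>
      hSfin j (Finset.mem_range.mp (by exact_mod_cast hj))))
  rintro ξ ⟨hξ, hne⟩
  replace hne : altSum (fun (_ : Fin 0 → Ordinal) ξ' =>
      if h : ∃ k : ℕ, ξ' < en k then Φ (fun _ => en (Nat.find h)) ξ' else 0) β ξ - Φ β ξ ≠ 0 := hne
  have hsum : altSum (fun (_ : Fin 0 → Ordinal) ξ' =>
      if h : ∃ k : ℕ, ξ' < en k then Φ (fun _ => en (Nat.find h)) ξ' else 0) β ξ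
      = if h : ∃ k : ℕ, ξ < en k then Φ (fun _ => en (Nat.find h)) ξ else 0 := by
    unfold altSum
    rw [Fin.sum_univ_one]
    show ((-1 : ℤ) ^ ((0 : Fin 1) : ℕ)) • _ = _
    rw [show ((0 : Fin 1) : ℕ) = 0 from rfl, pow_zero, one_smul]
  have hex : ∃ k : ℕ, ξ < en k := ⟨J, hξ.trans hJ⟩
  rw [hsum, dif_pos hex] at hne
  set k := Nat.find hex with hk
  have hkJ : k ≤ J := Nat.find_min' hex (hξ.trans hJ)
  by_cases hck : Φ (fun _ => en k) ξ = Φ (fun _ => en J) ξ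
  · left
    refine ⟨hξ, fun h0 => hne ?_⟩
    rw [← hck] at h0
    rw [show Φ β ξ = Φ (fun _ : Fin 1 => β 0) ξ by rw [← hβconst]]
    exact h0
  · have hkJ' : k < J := by
      rcases lt_or_eq_of_le hkJ with h | h
      · exact h
      · exact absurd (by rw [h]) hck
    right
    exact Set.mem_biUnion (Finset.mem_coe.mpr (Finset.mem_range.mpr hkJ'))
      ⟨Nat.find_spec hex, sub_ne_zero.mpr hck⟩


/-- The inductive step at limit ordinals. -/
theorem case_step_limit (m : ℕ)
    (IH : ∀ (δ' : Ordinal.{0}) (Φ' : (Fin (m + 1) → Ordinal) → Ordinal → A),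
      Ordinal.cof δ' < Cardinal.aleph ((m + 1 : ℕ) : Ordinal) → Sm δ' (altSum Φ') →
      ∃ Ψ', Sm δ' (fun β ξ => altSum Ψ' β ξ - Φ' β ξ))
    (δ : Ordinal.{0}) (hδlim : Order.IsSuccLimit δ)
    (hδ : Ordinal.cof δ < Cardinal.aleph ((m + 2 : ℕ) : Ordinal))
    (Φ : (Fin (m + 2) → Ordinal) → Ordinal → A) (hΦ : Sm δ (altSum Φ)) :
    ∃ Ψ : (Fin (m + 1) → Ordinal) → Ordinal → A,
      Sm δ (fun β ξ => altSum Ψ β ξ - Φ β ξ) := by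
  classical
  obtain ⟨e, he_mono, he_lt, he_cof⟩ := limit_seq δ hδlim
  set θ := (Ordinal.cof δ).ord with hθ
  set sg : ℤ := (-1 : ℤ) ^ (m + 3) with hsg
  set ρ : Ordinal → (Fin (m + 1) → Ordinal) → Ordinal → A :=
    fun a t ξ => sg • Φ (Fin.snoc t a) ξ with hρ
  set u : Ordinal → Ordinal → (Fin m → Ordinal) → Ordinal → A :=
    fun a b s ξ => - Φ (Fin.snoc (Fin.snoc s a) b) ξ with hu
  have hsg1 : sg = (-1 : ℤ) ^ (m + 1) := by
    rw [hsg, show m + 3 = (m + 1) + 2 by omega, pow_add]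
    norm_num
  -- (B) : ρ a is a trivialization of Φ below a
  have SmB : ∀ a, a < δ → Sm a (fun β ξ => altSum (ρ a) β ξ - Φ β ξ) := by
    intro a ha β hβ hβa
    have hsm := hΦ (Fin.snoc β a) (strictMono_snoc hβ hβa)
      (snoc_lt (fun j => (hβa j).trans ha) ha)
    have hpt : ∀ ξ, altSum (ρ a) β ξ - Φ β ξ = sg • altSum Φ (Fin.snoc β a) ξ := by
      intro ξ
      have h1 : altSum (ρ a) β ξ = sg • altSum (fun s ξ' => Φ (Fin.snoc s a) ξ') β ξ :=
        altSum_zsmul sg (fun s ξ' => Φ (Fin.snoc s a) ξ') β ξ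
      rw [h1, altSum_snoc Φ β a ξ, smul_add, smul_smul, ← pow_add, hsg,
        show ((-1 : ℤ)) ^ (m + 3 + (m + 2)) = -1 from
          Odd.neg_one_pow (Nat.odd_iff.mpr (by omega)), neg_one_zsmul]
      abel
    apply hsm.subset
    rintro ξ ⟨hξ, hne⟩
    refine ⟨by rw [snoc_zero']; exact hξ, fun h0 => hne ?_⟩
    show altSum (ρ a) β ξ - Φ β ξ = 0
    rw [hpt, h0, smul_zero]
  -- (C) : the difference of consecutive trivializations is a coboundary
  have SmC : ∀ a b, a < b → b < δ →
      Sm a (fun t ξ => (ρ b t ξ - ρ a t ξ) - altSum (u a b) t ξ) := by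
    intro a b hab hbδ t ht hta
    have htab : ∀ j, (Fin.snoc t a : Fin (m + 2) → Ordinal) j < b :=
      snoc_lt (fun j => (hta j).trans hab) hab
    have hsm := hΦ (Fin.snoc (Fin.snoc t a) b)
      (strictMono_snoc (strictMono_snoc ht hta) htab)
      (snoc_lt (fun j => (htab j).trans hbδ) hbδ)
    have hpt : ∀ ξ, (ρ b t ξ - ρ a t ξ) - altSum (u a b) t ξ
        = altSum Φ (Fin.snoc (Fin.snoc t a) b) ξ := by
      intro ξ
      have hub : altSum (u a b) t ξ
          = - altSum (fun s ξ' => Φ (Fin.snoc (Fin.snoc s a) b) ξ') t ξ := by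
        rw [show altSum (u a b) t ξ
            = altSum (fun s ξ' => (-1 : ℤ) • Φ (Fin.snoc (Fin.snoc s a) b) ξ') t ξ from
            altSum_congr (fun s ξ' => (neg_one_zsmul _).symm) t ξ,
          altSum_zsmul, neg_one_zsmul]
      rw [altSum_snoc Φ (Fin.snoc t a) b ξ,
        altSum_snoc (fun s ξ' => Φ (Fin.snoc s b) ξ') t a ξ, hub]
      have h1 : ((-1 : ℤ)) ^ (m + 1) = sg := hsg1.symm
      have h2 : ((-1 : ℤ)) ^ (m + 2) = -sg := by
        rw [hsg1, show m + 2 = (m + 1) + 1 by omega, pow_succ, mul_neg_one]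
      rw [h1, h2]
      show ρ b t ξ - ρ a t ξ
          - - altSum (fun s ξ' => Φ (Fin.snoc (Fin.snoc s a) b) ξ') t ξ
        = altSum (fun s ξ' => Φ (Fin.snoc (Fin.snoc s a) b) ξ') t ξ
          + sg • Φ (Fin.snoc t b) ξ + (-sg) • Φ (Fin.snoc t a) ξ
      rw [neg_smul]
      show sg • Φ (Fin.snoc t b) ξ - sg • Φ (Fin.snoc t a) ξ
          - - altSum (fun s ξ' => Φ (Fin.snoc (Fin.snoc s a) b) ξ') t ξ = _
      abel
    apply hsm.subset
    rintro ξ ⟨hξ, hne⟩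
    refine ⟨by rw [snoc_zero', snoc_zero']; exact hξ, fun h0 => hne ?_⟩
    show (ρ b t ξ - ρ a t ξ) - altSum (u a b) t ξ = 0
    rw [hpt, h0]
  -- (D) : cocycle relation for the u's
  have SmD : ∀ a b c, a < b → b < c → c < δ →
      Sm a (fun t ξ => altSum (u b c) t ξ - altSum (u a c) t ξ + altSum (u a b) t ξ) := by
    intro a b c hab hbc hcδ
    have h1 := SmC a b hab (hbc.trans hcδ)
    have h2 := (SmC b c hbc hcδ).mono hab.le
    have h3 := SmC a c (hab.trans hbc) hcδ
    apply ((h1.add h2).sub h3).neg.congr'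
    intro β hβ hβc ξ hξ
    show -((((ρ b β ξ - ρ a β ξ) - altSum (u a b) β ξ)
        + ((ρ c β ξ - ρ b β ξ) - altSum (u b c) β ξ))
        - ((ρ c β ξ - ρ a β ξ) - altSum (u a c) β ξ))
      = altSum (u b c) β ξ - altSum (u a c) β ξ + altSum (u a b) β ξ
    abel
  -- the recursively constructed corrections E
  obtain ⟨E, hE⟩ : ∃ E : Ordinal → ((Fin m → Ordinal) → Ordinal → A), ∀ ν, E ν =
      if h : ∃ x, ∀ ζ, ζ < ν → Sm (e ζ) (fun t ξ =>
          (ρ (e ν) t ξ + altSum x t ξ) - (ρ (e ζ) t ξ + altSum (E ζ) t ξ))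
      then h.choose else 0 := by
    refine ⟨WellFounded.fix Ordinal.lt_wf (fun ν rec =>
      if h : ∃ x, ∀ ζ, ∀ hζ : ζ < ν, Sm (e ζ) (fun t ξ =>
          (ρ (e ν) t ξ + altSum x t ξ) - (ρ (e ζ) t ξ + altSum (rec ζ hζ) t ξ))
      then h.choose else 0), fun ν => ?_⟩
    rw [WellFounded.fix_eq]
  have hGood : ∀ ν, ν < θ → ∀ ζ, ζ < ν → Sm (e ζ) (fun t ξ =>
      (ρ (e ν) t ξ + altSum (E ν) t ξ) - (ρ (e ζ) t ξ + altSum (E ζ) t ξ)) := by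
    intro ν
    induction ν using Ordinal.induction with
    | h ν IHν =>
    intro hνθ
    suffices hex : ∃ x, ∀ ζ, ζ < ν → Sm (e ζ) (fun t ξ =>
        (ρ (e ν) t ξ + altSum x t ξ) - (ρ (e ζ) t ξ + altSum (E ζ) t ξ)) by
      intro ζ hζ
      rw [hE ν, dif_pos hex]
      exact hex.choose_spec ζ hζ
    rcases Ordinal.zero_or_succ_or_isSuccLimit ν with rfl | ⟨μ, rfl⟩ | hνlim
    · exact ⟨0, fun ζ hζ => absurd hζ (by simp)⟩
    · -- successor stage
      have hμν : μ < Order.succ μ := Order.lt_succ μ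
      have hμθ : μ < θ := hμν.trans hνθ
      have hC := SmC (e μ) (e (Order.succ μ)) (he_mono hμν hνθ) (he_lt hνθ)
      refine ⟨fun t ξ => E μ t ξ - u (e μ) (e (Order.succ μ)) t ξ, ?_⟩
      intro ζ hζ
      have hsub : ∀ (β : Fin (m + 1) → Ordinal) ξ,
          altSum (fun t ξ' => E μ t ξ' - u (e μ) (e (Order.succ μ)) t ξ') β ξ
          = altSum (E μ) β ξ - altSum (u (e μ) (e (Order.succ μ))) β ξ := fun β ξ =>
        altSum_sub (E μ) (u (e μ) (e (Order.succ μ))) β ξ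
      rcases lt_or_eq_of_le (Order.lt_succ_iff.mp hζ) with hζμ | rfl
      · have hIH := IHν μ hμν hμθ ζ hζμ
        have hCζ := hC.mono (he_mono hζμ hμθ).le
        apply (hCζ.add hIH).congr'
        intro β hβ hβc ξ hξ
        show ((ρ (e (Order.succ μ)) β ξ - ρ (e μ) β ξ)
              - altSum (u (e μ) (e (Order.succ μ))) β ξ)
            + ((ρ (e μ) β ξ + altSum (E μ) β ξ) - (ρ (e ζ) β ξ + altSum (E ζ) β ξ))
          = (ρ (e (Order.succ μ)) β ξ
              + altSum (fun t ξ' => E μ t ξ' - u (e μ) (e (Order.succ μ)) t ξ') β ξ)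
            - (ρ (e ζ) β ξ + altSum (E ζ) β ξ)
        rw [hsub]
        abel
      · apply hC.congr'
        intro β hβ hβc ξ hξ
        show ((ρ (e (Order.succ ζ)) β ξ - ρ (e ζ) β ξ)
              - altSum (u (e ζ) (e (Order.succ ζ))) β ξ)
          = (ρ (e (Order.succ ζ)) β ξ
              + altSum (fun t ξ' => E ζ t ξ' - u (e ζ) (e (Order.succ ζ)) t ξ') β ξ)
            - (ρ (e ζ) β ξ + altSum (E ζ) β ξ)
        rw [hsub]
        abel
    · -- limit stage
      set lam : Ordinal := Ordinal.blsub ν (fun ζ _ => e ζ) with hlam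
      have hlam_gt : ∀ {ζ}, ζ < ν → e ζ < lam := fun {ζ} hζ => Ordinal.lt_blsub _ ζ hζ
      have hlam_cov : ∀ b, b < lam → ∃ ζ, ζ < ν ∧ b < e ζ := by
        intro b hb
        obtain ⟨i, hi, hbi⟩ := Ordinal.lt_blsub_iff.mp hb
        exact ⟨Order.succ i, hνlim.succ_lt hi,
          hbi.trans_lt (he_mono (Order.lt_succ i) ((hνlim.succ_lt hi).trans hνθ))⟩
      set w : Ordinal → (Fin m → Ordinal) → Ordinal → A :=
        fun ζ t ξ => E ζ t ξ - u (e ζ) (e ν) t ξ with hw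
      have hwsub : ∀ ζ (β : Fin (m + 1) → Ordinal) ξ,
          altSum (w ζ) β ξ = altSum (E ζ) β ξ - altSum (u (e ζ) (e ν)) β ξ := fun ζ β ξ =>
        altSum_sub (E ζ) (u (e ζ) (e ν)) β ξ
      have SmW : ∀ ζ ζ', ζ < ζ' → ζ' < ν →
          Sm (e ζ) (fun t ξ => altSum (w ζ') t ξ - altSum (w ζ) t ξ) := by
        intro ζ ζ' hζζ hζ'ν
        have hζν := hζζ.trans hζ'ν
        have hζ'θ := hζ'ν.trans hνθ
        have hζθ := hζν.trans hνθ
        have A1 := IHν ζ' hζ'ν hζ'θ ζ hζζ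
        have A2 := SmC (e ζ) (e ζ') (he_mono hζζ hζ'θ) (he_lt hζ'θ)
        have A3 := SmD (e ζ) (e ζ') (e ν) (he_mono hζζ hζ'θ) (he_mono hζ'ν hνθ) (he_lt hνθ)
        apply ((A1.sub A2).sub A3).congr'
        intro β hβ hβc ξ hξ
        show (((ρ (e ζ') β ξ + altSum (E ζ') β ξ) - (ρ (e ζ) β ξ + altSum (E ζ) β ξ))
              - ((ρ (e ζ') β ξ - ρ (e ζ) β ξ) - altSum (u (e ζ) (e ζ')) β ξ))
            - (altSum (u (e ζ') (e ν)) β ξ - altSum (u (e ζ) (e ν)) β ξ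
              + altSum (u (e ζ) (e ζ')) β ξ)
          = altSum (w ζ') β ξ - altSum (w ζ) β ξ
        rw [hwsub ζ' β ξ, hwsub ζ β ξ]
        abel
      -- the tuplewise glued family D
      set SD : (Fin (m + 1) → Ordinal) → Prop :=
        fun t => StrictMono t ∧ ∃ ζ, ζ < ν ∧ ∀ j, t j < e ζ with hSD
      set z : (Fin (m + 1) → Ordinal) → Ordinal :=
        fun t => sInf {ζ | ζ < ν ∧ ∀ j, t j < e ζ} with hz
      set D : (Fin (m + 1) → Ordinal) → Ordinal → A :=
        fun t ξ => if SD t then altSum (w (z t)) t ξ else 0 with hD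
      have hzmem : ∀ t, SD t → (z t < ν ∧ ∀ j, t j < e (z t)) := by
        intro t ht
        exact csInf_mem ht.2
      have hzle : ∀ t ζ, ζ < ν → (∀ j, t j < e ζ) → z t ≤ ζ :=
        fun t ζ h1 h2 => csInf_le' ⟨h1, h2⟩
      have hDval : ∀ t ξ, SD t → D t ξ = altSum (w (z t)) t ξ := by
        intro t ξ ht
        show (if SD t then altSum (w (z t)) t ξ else 0) = _
        rw [if_pos ht]
      have hDw : ∀ ζ, ζ < ν → Sm (e ζ) (fun t ξ => D t ξ - altSum (w ζ) t ξ) := by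
        intro ζ hζν t ht htζ
        have hSDt : SD t := ⟨ht, ζ, hζν, htζ⟩
        have hzt := hzmem t hSDt
        rcases lt_or_eq_of_le (hzle t ζ hζν htζ) with hlt | heq
        · apply (SmW (z t) ζ hlt hζν t ht hzt.2).subset
          rintro ξ ⟨hξ, hne⟩
          refine ⟨hξ, fun h0 => hne ?_⟩
          show D t ξ - altSum (w ζ) t ξ = 0
          rw [hDval t ξ hSDt]
          rw [sub_eq_zero] at h0 ⊢
          exact h0.symm
        · apply Set.finite_empty.subset
          rintro ξ ⟨hξ, hne⟩
          apply hne
          show D t ξ - altSum (w ζ) t ξ = 0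
          rw [hDval t ξ hSDt, heq, _root_.sub_self]
      have hDcoh : Sm lam (altSum D) := by
        intro β hβ hβlam
        obtain ⟨zh, hzhν, hzh⟩ := hlam_cov (β (Fin.last (m + 1))) (hβlam _)
        have hβz : ∀ i, β i < e zh := fun i => (hβ.monotone (Fin.le_last i)).trans_lt hzh
        apply Set.Finite.subset (Set.finite_iUnion fun i : Fin (m + 2) =>
          hDw zh hzhν (β ∘ i.succAbove) (hβ.comp (Fin.strictMono_succAbove i))
            (fun j => hβz _))
        rintro ξ ⟨hξ, hne⟩
        rw [Set.mem_iUnion]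
        by_contra hc
        push_neg at hc
        apply hne
        have hterm : ∀ i : Fin (m + 2),
            D (β ∘ i.succAbove) ξ = altSum (w zh) (β ∘ i.succAbove) ξ := by
          intro i
          have hi := hc i
          simp only [Set.mem_setOf_eq, not_and, not_not] at hi
          exact sub_eq_zero.mp (hi (hξ.trans_le (hβ.monotone (Fin.zero_le _))))
        rw [altSum_congr_at β ξ hterm, altSum_altSum]
      have hcard : Ordinal.cof lam < Cardinal.aleph ((m + 1 : ℕ) : Ordinal) := by
        have h1 : Ordinal.cof lam ≤ ν.card := Ordinal.cof_blsub_le _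
        have h2 : ν.card < Ordinal.cof δ := Cardinal.lt_ord.mp hνθ
        have h3 : Ordinal.cof δ ≤ Cardinal.aleph ((m + 1 : ℕ) : Ordinal) := by
          have hcast : ((m + 2 : ℕ) : Ordinal) = Order.succ ((m + 1 : ℕ) : Ordinal) := by
            rw [show (m + 2 : ℕ) = (m + 1) + 1 by omega, Nat.cast_succ,
              Ordinal.add_one_eq_succ]
          rw [hcast, Cardinal.aleph_succ] at hδ
          exact Order.lt_succ_iff.mp hδ
        exact (h1.trans_lt h2).trans_le h3
      obtain ⟨ε, hε⟩ := IH lam D hcard hDcoh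
      refine ⟨ε, ?_⟩
      intro ζ hζν
      have hζθ := hζν.trans hνθ
      have hC := SmC (e ζ) (e ν) (he_mono hζν hνθ) (he_lt hνθ)
      have hεζ := hε.mono (hlam_gt hζν).le
      have hDwζ := hDw ζ hζν
      apply ((hC.add hεζ).add hDwζ).congr'
      intro β hβ hβc ξ hξ
      show (((ρ (e ν) β ξ - ρ (e ζ) β ξ) - altSum (u (e ζ) (e ν)) β ξ)
            + (altSum ε β ξ - D β ξ))
          + (D β ξ - altSum (w ζ) β ξ)
        = (ρ (e ν) β ξ + altSum ε β ξ) - (ρ (e ζ) β ξ + altSum (E ζ) β ξ)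
      rw [hwsub ζ β ξ]
      abel
  -- the final gluing
  set SF : (Fin (m + 1) → Ordinal) → Prop :=
    fun t => StrictMono t ∧ ∃ ζ, ζ < θ ∧ ∀ j, t j < e ζ with hSF
  set zf : (Fin (m + 1) → Ordinal) → Ordinal :=
    fun t => sInf {ζ | ζ < θ ∧ ∀ j, t j < e ζ} with hzf
  have hzfmem : ∀ t, SF t → (zf t < θ ∧ ∀ j, t j < e (zf t)) := by
    intro t ht
    exact csInf_mem ht.2
  have hzfle : ∀ t ζ, ζ < θ → (∀ j, t j < e ζ) → zf t ≤ ζ :=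
    fun t ζ h1 h2 => csInf_le' ⟨h1, h2⟩
  refine ⟨fun t ξ => if SF t then ρ (e (zf t)) t ξ + altSum (E (zf t)) t ξ else 0, ?_⟩
  intro β hβ hβδ
  obtain ⟨zh, hzhθ, hzh⟩ := he_cof (β (Fin.last (m + 1))) (hβδ _)
  have hβz : ∀ i, β i < e zh := fun i => (hβ.monotone (Fin.le_last i)).trans_lt hzh
  have hV := SmB (e zh) (he_lt hzhθ) β hβ hβz
  have hUi : ∀ i : Fin (m + 2), {ξ : Ordinal | ξ < β 0 ∧
      (if SF (β ∘ i.succAbove) then ρ (e (zf (β ∘ i.succAbove))) (β ∘ i.succAbove) ξ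
          + altSum (E (zf (β ∘ i.succAbove))) (β ∘ i.succAbove) ξ else 0)
        - (ρ (e zh) (β ∘ i.succAbove) ξ + altSum (E zh) (β ∘ i.succAbove) ξ) ≠ 0}.Finite := by
    intro i
    have hti : StrictMono (β ∘ i.succAbove) := hβ.comp (Fin.strictMono_succAbove i)
    have htib : ∀ j, (β ∘ i.succAbove) j < e zh := fun j => hβz _
    have hSFt : SF (β ∘ i.succAbove) := ⟨hti, zh, hzhθ, htib⟩
    have hzt := hzfmem _ hSFt
    rcases lt_or_eq_of_le (hzfle _ zh hzhθ htib) with hlt | heq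
    · have hG := hGood zh hzhθ (zf (β ∘ i.succAbove)) hlt (β ∘ i.succAbove) hti hzt.2
      apply hG.subset
      rintro ξ ⟨hξ, hne⟩
      refine ⟨hξ.trans_le (hβ.monotone (Fin.zero_le _)), fun h0 => hne ?_⟩
      rw [if_pos hSFt]
      rw [sub_eq_zero] at h0 ⊢
      exact h0.symm
    · apply Set.finite_empty.subset
      rintro ξ ⟨hξ, hne⟩
      apply hne
      rw [if_pos hSFt, heq, _root_.sub_self]
  apply Set.Finite.subset (hV.union (Set.finite_iUnion hUi))
  rintro ξ ⟨hξ, hne⟩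
  by_contra hc
  push_neg at hc
  simp only [Set.mem_union, Set.mem_iUnion, Set.mem_setOf_eq, not_or, not_exists, not_and,
    not_not] at hc
  apply hne
  show altSum (fun t ξ' => if SF t then ρ (e (zf t)) t ξ' + altSum (E (zf t)) t ξ' else 0) β ξ
      - Φ β ξ = 0
  have hterm : ∀ i : Fin (m + 2),
      (if SF (β ∘ i.succAbove) then ρ (e (zf (β ∘ i.succAbove))) (β ∘ i.succAbove) ξ
          + altSum (E (zf (β ∘ i.succAbove))) (β ∘ i.succAbove) ξ else 0)
        = ρ (e zh) (β ∘ i.succAbove) ξ + altSum (E zh) (β ∘ i.succAbove) ξ := by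
    intro i
    exact sub_eq_zero.mp (hc.2 i hξ)
  have hsum1 : altSum (fun t ξ' =>
        if SF t then ρ (e (zf t)) t ξ' + altSum (E (zf t)) t ξ' else 0) β ξ
      = altSum (fun t ξ' => ρ (e zh) t ξ' + altSum (E zh) t ξ') β ξ :=
    altSum_congr_at β ξ hterm
  have hsum2 : altSum (fun t ξ' => ρ (e zh) t ξ' + altSum (E zh) t ξ') β ξ
      = altSum (ρ (e zh)) β ξ + altSum (altSum (E zh)) β ξ :=
    altSum_add (ρ (e zh)) (altSum (E zh)) β ξ
  rw [hsum1, hsum2, altSum_altSum, add_zero, sub_eq_zero]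
  exact sub_eq_zero.mp (hc.1 hξ)

/-- Goblot's theorem, in terms of `Sm`. -/
theorem key (m : ℕ) : ∀ (δ : Ordinal.{0}) (Φ : (Fin (m + 1) → Ordinal) → Ordinal → A),
    Ordinal.cof δ < Cardinal.aleph ((m + 1 : ℕ) : Ordinal) → Sm δ (altSum Φ) →
    ∃ Ψ : (Fin m → Ordinal) → Ordinal → A, Sm δ (fun β ξ => altSum Ψ β ξ - Φ β ξ) := by
  induction m with
  | zero =>
    intro δ Φ hδ hΦ
    rcases Ordinal.zero_or_succ_or_isSuccLimit δ with rfl | ⟨γ, rfl⟩ | hδlim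
    · exact ⟨0, fun β _ hβc => absurd (hβc 0) (by simp)⟩
    · exact case_succ 0 γ Φ hΦ
    · have hcof : Ordinal.cof δ ≤ Cardinal.aleph0 := by
        rw [show ((0 + 1 : ℕ) : Ordinal) = Order.succ (0 : Ordinal) by
            rw [show (0 + 1 : ℕ) = 1 by norm_num, Nat.cast_one, ← Ordinal.succ_zero],
          Cardinal.aleph_succ] at hδ
        have := Order.lt_succ_iff.mp hδ
        rwa [Cardinal.aleph_zero] at this
      exact case_zero_limit δ hδlim hcof Φ hΦ
  | succ m IHm =>
    intro δ Φ hδ hΦ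
    rcases Ordinal.zero_or_succ_or_isSuccLimit δ with rfl | ⟨γ, rfl⟩ | hδlim
    · exact ⟨0, fun β _ hβc => absurd (hβc 0) (by simp)⟩
    · exact case_succ (m + 1) γ Φ hΦ
    · exact case_step_limit m IHm δ hδlim hδ Φ hΦ

end GoblotAux

/-- Theorem (Goblot): for any abelian group `A`, positive integer `n` (here `n + 1`), and
ordinal `δ` of cofinality `< ℵ_n` (in particular any successor `δ`), every `n`-coherent
`A`-valued family of height `δ` is `n`-trivial. -/
theorem statement11 (A : Type*) [AddCommGroup A] (n : ℕ) (δ : Ordinal)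
    (hδ : Ordinal.cof δ < Cardinal.aleph ((n : Ordinal) + 1))
    (Φ : (Fin (n + 1) → Ordinal) → Ordinal → A) (hΦ : NCoherent δ Φ) :
    NTrivial δ Φ := by
  have h : Ordinal.cof δ < Cardinal.aleph ((n + 1 : ℕ) : Ordinal) := by
    rwa [Nat.cast_succ]
  obtain ⟨Ψ, hΨ⟩ := GoblotAux.key n δ Φ h hΦ
  exact ⟨Ψ, fun β hβ hβδ => (hΨ β hβ hβδ).subset fun ξ hξ => ⟨hξ.1, sub_ne_zero.mpr hξ.2⟩⟩
end
end

section
/- Fix an abelian group A, integers n > m ≥ 0, and ordinals ξ < η such that ξ is a successor ordinal or cf(ξ) < ℵ_m. Suppose Φ = {φ_β̄ | β̄ ∈ [η]^n} is an n-trivial A-valued family of height η. Then any n-trivialization Ψ of the restriction Φ↾ξ = {φ_β̄ | β̄ ∈ [ξ]^n} extends to an n-trivialization Ψ' of Φ (that is, for n > 1, ψ'_β̄ = ψ_β̄ for all β̄ ∈ [ξ]^{n−1}, and for n = 1 the trivializing function ψ' : η → A satisfies ψ'↾ξ = ψ). -/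
noncomputable section
open Ordinal Set

lemma valSuccAbove {n : ℕ} (p : Fin (n+1)) (i : Fin n) :
    ((p.succAbove i : Fin (n+1)) : ℕ) = if (i:ℕ) < (p:ℕ) then (i:ℕ) else (i:ℕ)+1 := by
  rw [Fin.succAbove]
  split_ifs with h1 h2 <;> simp_all [Fin.lt_def]

lemma finNeZero {n : ℕ} {i : Fin (n+2)} (h : 0 < (i:ℕ)) : i ≠ 0 := by
  rw [← Fin.val_ne_iff]; simp only [Fin.val_zero]; omega

lemma finNeLast {n : ℕ} {i : Fin (n+2)} (h : (i:ℕ) < n+1) : i ≠ Fin.last (n+1) := by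
  rw [← Fin.val_ne_iff]; simp only [Fin.val_last]; omega

lemma compA {n : ℕ} (i : Fin (n+2)) (j : Fin (n+1)) (h : (i:ℕ) ≤ (j:ℕ)) (h' : i ≠ Fin.last (n+1)) :
    i.succAbove ∘ j.succAbove = (j.succ).succAbove ∘ (i.castPred h').succAbove := by
  funext k
  apply Fin.ext
  simp only [Function.comp_apply, valSuccAbove, Fin.val_succ]
  have e := Fin.coe_castPred i h'
  split_ifs <;> omega

lemma compB {n : ℕ} (i : Fin (n+2)) (j : Fin (n+1)) (h : (j:ℕ) < (i:ℕ)) (h' : i ≠ 0) :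
    i.succAbove ∘ j.succAbove = (j.castSucc).succAbove ∘ (i.pred h').succAbove := by
  funext k
  apply Fin.ext
  simp only [Function.comp_apply, valSuccAbove, Fin.coe_castSucc, Fin.coe_pred]
  split_ifs <;> omega

lemma altSum_altSum {A : Type*} [AddCommGroup A] {n : ℕ}
    (Θ : (Fin n → Ordinal.{0}) → Ordinal.{0} → A) (γ : Fin (n+2) → Ordinal) (ζ : Ordinal) :
    altSum (fun β => altSum Θ β) γ ζ = 0 := by
  unfold altSum
  simp only [Finset.smul_sum, smul_smul, ← pow_add]
  rw [← Fintype.sum_prod_type']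
  set f : Fin (n+2) × Fin (n+1) → A :=
    fun x => ((-1:ℤ) ^ ((x.1:ℕ) + (x.2:ℕ))) • Θ ((γ ∘ x.1.succAbove) ∘ x.2.succAbove) ζ with hf
  show ∑ x : Fin (n+2) × Fin (n+1), f x = 0
  apply Finset.sum_ninvolution
    (g := fun x : Fin (n+2) × Fin (n+1) => if h : (x.2:ℕ) < (x.1:ℕ)
      then (x.2.castSucc, x.1.pred (finNeZero (by omega)))
      else (x.2.succ, x.1.castPred (finNeLast (by have := x.2.isLt; omega))))
  · rintro ⟨i, j⟩
    by_cases h : (j:ℕ) < (i:ℕ)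
    · rw [dif_pos h]
      simp only [hf]
      have hco : (γ ∘ i.succAbove) ∘ j.succAbove
          = (γ ∘ (j.castSucc).succAbove) ∘ (i.pred (finNeZero (by omega))).succAbove := by
        rw [Function.comp_assoc, Function.comp_assoc, compB i j h]
      rw [hco, ← add_smul]
      convert zero_smul ℤ _
      simp only [Fin.coe_castSucc, Fin.coe_pred]
      have he : (i:ℕ) + (j:ℕ) = ((j:ℕ) + ((i:ℕ)-1)) + 1 := by omega
      rw [he, pow_succ]
      ring
    · rw [dif_neg h]
      simp only [hf]
      have h' : (i:ℕ) ≤ (j:ℕ) := by omega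
      have hlast : i ≠ Fin.last (n+1) := finNeLast (by have := j.isLt; omega)
      have hco : (γ ∘ i.succAbove) ∘ j.succAbove
          = (γ ∘ (j.succ).succAbove) ∘ (i.castPred hlast).succAbove := by
        rw [Function.comp_assoc, Function.comp_assoc, compA i j h']
      rw [hco, ← add_smul]
      convert zero_smul ℤ _
      simp only [Fin.val_succ, Fin.coe_castPred]
      have he : (j:ℕ) + 1 + (i:ℕ) = ((i:ℕ) + (j:ℕ)) + 1 := by omega
      rw [he, pow_succ]
      ring
  · rintro ⟨i, j⟩ _
    by_cases h : (j:ℕ) < (i:ℕ)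
    · rw [dif_pos h]
      intro heq
      have := congrArg (fun y : Fin (n+2) × Fin (n+1) => ((y.1 : Fin (n+2)) : ℕ)) heq
      simp only [Fin.coe_castSucc] at this
      omega
    · rw [dif_neg h]
      intro heq
      have := congrArg (fun y : Fin (n+2) × Fin (n+1) => ((y.1 : Fin (n+2)) : ℕ)) heq
      simp only [Fin.val_succ] at this
      omega
  · exact fun _ => Finset.mem_univ _
  · rintro ⟨i, j⟩
    by_cases h : (j:ℕ) < (i:ℕ)
    · rw [dif_pos h]
      have h2 : ¬ (((j.castSucc : Fin (n+2)), (i.pred (finNeZero (by omega)) : Fin (n+1))).2 : ℕ)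
          < ((((j.castSucc : Fin (n+2)), (i.pred (finNeZero (by omega)) : Fin (n+1))).1 : Fin (n+2)) : ℕ) := by
        simp only [Fin.coe_pred, Fin.coe_castSucc]; omega
      rw [dif_neg h2]
      ext <;> simp
    · rw [dif_neg h]
      have h2 : (((j.succ : Fin (n+2)), (i.castPred (finNeLast (by have := j.isLt; omega)) : Fin (n+1))).2 : ℕ)
          < ((((j.succ : Fin (n+2)), (i.castPred (finNeLast (by have := j.isLt; omega)) : Fin (n+1))).1 : Fin (n+2)) : ℕ) := by
        simp only [Fin.coe_castPred, Fin.val_succ]; omega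
      rw [dif_pos h2]
      ext <;> simp



lemma snoc_strictMono {q : ℕ} {γ : Fin q → Ordinal} {σ : Ordinal}
    (hγ : StrictMono γ) (hlt : ∀ i, γ i < σ) : StrictMono (Fin.snoc γ σ : Fin (q+1) → Ordinal) := by
  intro i j hij
  rcases Fin.eq_castSucc_or_eq_last j with ⟨j', rfl⟩ | rfl
  · have hi : i ≠ Fin.last q := ne_of_lt (lt_of_lt_of_le hij (Fin.le_last _))
    obtain ⟨i', rfl⟩ := Fin.exists_castSucc_eq.2 hi
    rw [Fin.snoc_castSucc, Fin.snoc_castSucc]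
    exact hγ (by rwa [Fin.castSucc_lt_castSucc_iff] at hij)
  · have hi : i ≠ Fin.last q := ne_of_lt hij
    obtain ⟨i', rfl⟩ := Fin.exists_castSucc_eq.2 hi
    rw [Fin.snoc_castSucc, Fin.snoc_last]
    exact hlt i'

lemma comp_succAbove_last {q : ℕ} (β : Fin (q+1) → Ordinal) (σ : Ordinal) :
    (Fin.snoc β σ : Fin (q+2) → Ordinal) ∘ (Fin.last (q+1)).succAbove = β := by
  funext k
  simp [Fin.succAbove_last]

lemma comp_succAbove_castSucc {q : ℕ} (β : Fin (q+1) → Ordinal) (σ : Ordinal) (i' : Fin (q+1)) :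
    (Fin.snoc β σ : Fin (q+2) → Ordinal) ∘ (i'.castSucc).succAbove
      = Fin.snoc (β ∘ i'.succAbove) σ := by
  funext k
  rcases Fin.eq_castSucc_or_eq_last k with ⟨k', rfl⟩ | rfl
  · have : (i'.castSucc).succAbove (k'.castSucc) = (i'.succAbove k').castSucc := by
      apply Fin.ext
      simp only [valSuccAbove, Fin.coe_castSucc]
      all_goals (split_ifs <;> omega)
    simp only [Function.comp_apply, this, Fin.snoc_castSucc]
  · have : (i'.castSucc).succAbove (Fin.last q) = Fin.last (q+1) := by
      apply Fin.ext
      simp only [valSuccAbove, Fin.coe_castSucc, Fin.val_last]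
      have := i'.isLt
      split_ifs <;> omega
    simp only [Function.comp_apply, this, Fin.snoc_last]

lemma ordLtSucc (σ : Ordinal.{0}) : σ < σ + 1 := by
  rw [Ordinal.add_one_eq_succ]; exact Order.lt_succ σ

lemma ordLtSuccIff {a σ : Ordinal.{0}} : a < σ + 1 ↔ a ≤ σ := by
  rw [Ordinal.add_one_eq_succ]; exact Order.lt_succ_iff

lemma negOnePowSq (q : ℕ) (a : A') [AddCommGroup A'] : ((-1:ℤ)^q) • ((-1:ℤ)^q) • a = a := by
  rw [smul_smul, ← pow_add, Even.neg_one_pow ⟨q, rfl⟩, one_smul]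

lemma trivSuccS {A : Type*} [AddCommGroup A] {q : ℕ} (σ : Ordinal)
    (E : (Fin (q+1) → Ordinal.{0}) → Ordinal.{0} → A) (hcoh : NCoherent (σ+1) E) :
    ∃ Θ, IsNTrivialization (σ+1) E Θ := by
  classical
  set E' : (Fin (q+1) → Ordinal.{0}) → Ordinal.{0} → A :=
    fun β ζ => if StrictMono β then E β ζ else 0 with hE'
  refine ⟨fun g ζ => ((-1:ℤ)^q) • E' (Fin.snoc g σ) ζ, ?_⟩
  intro β hβ hlt
  have hle : ∀ i, β i ≤ σ := fun i => ordLtSuccIff.mp (hlt i)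
  rcases eq_or_lt_of_le (hle (Fin.last q)) with hB | hA
  · -- top coordinate equals σ : exact triviality
    apply Set.Finite.subset Set.finite_empty
    intro ζ hz
    obtain ⟨hζ, hne⟩ := hz
    exfalso
    apply hne
    show altSum (fun g ζ => ((-1:ℤ)^q) • E' (Fin.snoc g σ) ζ) β ζ = E β ζ
    unfold altSum
    beta_reduce
    rw [Fin.sum_univ_castSucc]
    have hzero : ∀ i' : Fin q,
        ((-1:ℤ)^(((i'.castSucc : Fin (q+1))):ℕ)) •
          (((-1:ℤ)^q) • E' (Fin.snoc (β ∘ (i'.castSucc).succAbove) σ) ζ) = 0 := by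
      intro i'
      have hns : ¬ StrictMono (Fin.snoc (β ∘ (i'.castSucc).succAbove) σ : Fin (q+1) → Ordinal) := by
        intro hs
        obtain ⟨k, hk⟩ := Fin.exists_succAbove_eq
          (show (Fin.last q) ≠ ((i'.castSucc) : Fin (q+1)) by
            rw [← Fin.val_ne_iff]; simp only [Fin.val_last, Fin.coe_castSucc]
            have := i'.isLt; omega)
        have h1 : (Fin.snoc (β ∘ (i'.castSucc).succAbove) σ : Fin (q+1) → Ordinal) (Fin.castSucc k) = σ := by
          rw [Fin.snoc_castSucc]
          simp only [Function.comp_apply, hk, hB]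
        have h2 := hs (Fin.castSucc_lt_last k)
        rw [h1, Fin.snoc_last] at h2
        exact lt_irrefl _ h2
      simp only [hE', hns, if_false, smul_zero]
    rw [Finset.sum_congr rfl (fun i' _ => hzero i'), Finset.sum_const_zero, zero_add]
    have hfun : β ∘ (Fin.last q).succAbove = Fin.init β := by
      rw [Fin.succAbove_last]; rfl
    have hsnoc : (Fin.snoc (Fin.init β) σ : Fin (q+1) → Ordinal) = β := by
      rw [← hB, Fin.snoc_init_self]
    rw [hfun, hsnoc, hE']
    simp only [hβ, if_true, Fin.val_last]
    exact negOnePowSq q _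
  · -- all coordinates < σ
    have hltσ : ∀ i, β i < σ := fun i => lt_of_le_of_lt (hβ.monotone (Fin.le_last i)) hA
    set δ : Fin (q+2) → Ordinal := Fin.snoc β σ with hδ
    have hδmono : StrictMono δ := snoc_strictMono hβ hltσ
    have hδlt : ∀ i, δ i < σ + 1 := by
      intro i
      rcases Fin.eq_castSucc_or_eq_last i with ⟨i', rfl⟩ | rfl
      · rw [hδ, Fin.snoc_castSucc]; exact (hltσ i').trans (ordLtSucc σ)
      · rw [hδ, Fin.snoc_last]; exact ordLtSucc σ
    have hδ0 : δ 0 = β 0 := by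
      rw [hδ, show (0 : Fin (q+2)) = Fin.castSucc 0 by rfl, Fin.snoc_castSucc]
    apply Set.Finite.subset (hcoh δ hδmono hδlt)
    intro ζ hz
    obtain ⟨hζ, hne⟩ := hz
    refine ⟨by rwa [hδ0], ?_⟩
    intro hzero
    apply hne
    show altSum (fun g ζ => ((-1:ℤ)^q) • E' (Fin.snoc g σ) ζ) β ζ = E β ζ
    have h1 : altSum E δ ζ
        = (∑ i' : Fin (q+1), ((-1:ℤ)^(i':ℕ)) • E (Fin.snoc (β ∘ i'.succAbove) σ) ζ)
          + ((-1:ℤ)^(q+1)) • E β ζ := by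
      unfold altSum
      rw [Fin.sum_univ_castSucc]
      congr 1
      · apply Finset.sum_congr rfl
        intro i' _
        rw [Fin.coe_castSucc, hδ, comp_succAbove_castSucc]
      · rw [hδ, comp_succAbove_last, Fin.val_last]
    have h2 : altSum (fun g ζ => ((-1:ℤ)^q) • E' (Fin.snoc g σ) ζ) β ζ
        = ∑ i' : Fin (q+1), ((-1:ℤ)^(i':ℕ)) • (((-1:ℤ)^q) • E (Fin.snoc (β ∘ i'.succAbove) σ) ζ) := by
      unfold altSum
      beta_reduce
      apply Finset.sum_congr rfl
      intro i' _
      congr 1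
      rw [hE']
      have hsm : StrictMono (Fin.snoc (β ∘ i'.succAbove) σ : Fin (q+1) → Ordinal) :=
        snoc_strictMono (hβ.comp (Fin.strictMono_succAbove i'))
          (fun k => hltσ (i'.succAbove k))
      simp only [hsm, if_true]
    rw [h1] at hzero
    -- from hzero : sum + (-1)^(q+1) • E β ζ = 0
    have hsum : (∑ i' : Fin (q+1), ((-1:ℤ)^(i':ℕ)) • E (Fin.snoc (β ∘ i'.succAbove) σ) ζ)
        = - (((-1:ℤ)^(q+1)) • E β ζ) := by
      rw [eq_neg_iff_add_eq_zero]; exact hzero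
    rw [h2]
    have : ∑ i' : Fin (q+1), ((-1:ℤ)^(i':ℕ)) • (((-1:ℤ)^q) • E (Fin.snoc (β ∘ i'.succAbove) σ) ζ)
        = ((-1:ℤ)^q) • ∑ i' : Fin (q+1), ((-1:ℤ)^(i':ℕ)) • E (Fin.snoc (β ∘ i'.succAbove) σ) ζ := by
      rw [Finset.smul_sum]
      apply Finset.sum_congr rfl
      intro i' _
      rw [smul_smul, smul_smul, mul_comm]
    rw [this, hsum, smul_neg, smul_smul, ← pow_add]
    have : (q + (q+1)) = 2*q + 1 := by ring
    rw [this, pow_succ, pow_mul]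
    norm_num


def Agree {A : Type*} [AddCommGroup A] {q : ℕ}
    (Θ Θ' : (Fin q → Ordinal.{0}) → Ordinal.{0} → A) (c : Ordinal) : Prop :=
  ∀ β : Fin q → Ordinal, StrictMono β → (∀ i, β i < c) →
    ∀ ζ, ζ < c → (∀ i, ζ < β i) → Θ' β ζ = Θ β ζ

lemma unionTriv {A : Type*} [AddCommGroup A] {q : ℕ}
    (E : (Fin (q+1) → Ordinal.{0}) → Ordinal.{0} → A)
    (s₀ : Ordinal) (g : Ordinal → Ordinal)
    (Θ : Ordinal → ((Fin q → Ordinal.{0}) → Ordinal.{0} → A))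
    (gmono : ∀ t t', t ≤ t' → t' < s₀ → g t ≤ g t')
    (htriv : ∀ t, t < s₀ → IsNTrivialization (g t) E (Θ t))
    (hagree : ∀ t t', t ≤ t' → t' < s₀ → Agree (Θ t) (Θ t') (g t))
    (δ : Ordinal) (hδ1 : ∀ t, t < s₀ → g t ≤ δ) (hδ2 : ∀ x, x < δ → ∃ t, t < s₀ ∧ x < g t) :
    ∃ Θ', IsNTrivialization δ E Θ' ∧ ∀ t, t < s₀ → Agree (Θ t) Θ' (g t) := by
  classical
  set Θ' : (Fin q → Ordinal.{0}) → Ordinal.{0} → A :=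
    fun β ζ => if h : StrictMono β ∧ ∃ t, t < s₀ ∧ (∀ i, β i < g t) ∧ ζ < g t
      then Θ h.2.choose β ζ else 0 with hΘ'
  have welldef : ∀ (β : Fin q → Ordinal) (ζ : Ordinal) (t : Ordinal), StrictMono β → t < s₀ →
      (∀ i, β i < g t) → ζ < g t → (∀ i, ζ < β i) → Θ' β ζ = Θ t β ζ := by
    intro β ζ t hβ hts hcoords hζ hζβ
    have hcond : StrictMono β ∧ ∃ t', t' < s₀ ∧ (∀ i, β i < g t') ∧ ζ < g t' :=
      ⟨hβ, t, hts, hcoords, hζ⟩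
    rw [hΘ']
    simp only [hcond, dif_pos]
    obtain ⟨ht₁s, hco₁, hζ₁⟩ := hcond.2.choose_spec
    set t₁ := hcond.2.choose
    rcases le_total t₁ t with hle | hle
    · exact (hagree t₁ t hle hts β hβ hco₁ ζ hζ₁ hζβ).symm ▸
        (hagree t₁ t hle hts β hβ hco₁ ζ hζ₁ hζβ)
    · exact hagree t t₁ hle ht₁s β hβ hcoords ζ hζ hζβ
  refine ⟨Θ', ?_, ?_⟩
  · intro β hβ hlt
    -- find a single t dominating all coordinates
    have hex : ∀ i : Fin (q+1), ∃ t, t < s₀ ∧ β i < g t := fun i => hδ2 (β i) (hlt i)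
    choose c hc1 hc2 using hex
    set t := Finset.univ.sup c with ht
    have hts : t < s₀ := by
      rw [ht, Finset.sup_lt_iff (lt_of_le_of_lt (zero_le (a := c 0)) (hc1 0))]
      exact fun i _ => hc1 i
    have hco : ∀ i, β i < g t :=
      fun i => lt_of_lt_of_le (hc2 i) (gmono (c i) t (Finset.le_sup (Finset.mem_univ i)) hts)
    apply Set.Finite.subset (htriv t hts β hβ hco)
    intro ζ hz
    obtain ⟨hζ, hne⟩ := hz
    refine ⟨hζ, ?_⟩
    intro heq
    apply hne
    show altSum Θ' β ζ = E β ζ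
    rw [← heq]
    unfold altSum
    apply Finset.sum_congr rfl
    intro i _
    congr 1
    apply welldef _ _ t (hβ.comp (Fin.strictMono_succAbove i)) hts
      (fun k => hco (i.succAbove k))
      (lt_of_lt_of_le hζ (le_of_lt (hco 0)))
    intro k
    exact lt_of_lt_of_le hζ (hβ.monotone (Fin.zero_le (i.succAbove k)))
  · intro t hts β hβ hco ζ hζ hζβ
    exact welldef β ζ t hβ hts hco hζ hζβ

lemma emptyTuple (β : Fin 0 → Ordinal.{0}) : β = Fin.elim0 := by
  funext k; exact k.elim0

lemma altSum_zero_dim {A : Type*} [AddCommGroup A]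
    (C : (Fin 0 → Ordinal.{0}) → Ordinal.{0} → A) (γ : Fin 1 → Ordinal) (ζ : Ordinal) :
    altSum C γ ζ = C Fin.elim0 ζ := by
  unfold altSum
  rw [Fin.sum_univ_one]
  rw [emptyTuple (γ ∘ Fin.succAbove 0)]
  norm_num

lemma NCoherent.mono {A : Type*} [AddCommGroup A] {n : ℕ} {ξ δ : Ordinal}
    {E : (Fin n → Ordinal.{0}) → Ordinal.{0} → A} (h : NCoherent ξ E) (hle : δ ≤ ξ) :
    NCoherent δ E :=
  fun β hm hlt => h β hm (fun i => lt_of_lt_of_le (hlt i) hle)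

lemma triv0 {A : Type*} [AddCommGroup A] (ξ : Ordinal)
    (hξ : (∃ σ, ξ = σ + 1) ∨ Ordinal.cof ξ < Cardinal.aleph ((0:ℕ) : Ordinal))
    (E : (Fin 0 → Ordinal.{0}) → Ordinal.{0} → A) (hcoh : NCoherent ξ E) :
    {ζ : Ordinal | ζ < ξ ∧ E Fin.elim0 ζ ≠ 0}.Finite := by
  rcases Ordinal.zero_or_succ_or_isSuccLimit ξ with rfl | ⟨σ, hσ⟩ | hlim
  · apply Set.Finite.subset Set.finite_empty
    rintro ζ ⟨h1, _⟩
    exact absurd h1 (not_lt_zero (a := ζ))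
  · rw [← Ordinal.add_one_eq_succ] at hσ
    subst hσ
    have hmono : StrictMono (fun _ : Fin 1 => σ) := by
      intro i j hij
      exact absurd (Subsingleton.elim i j) (ne_of_lt hij)
    have := hcoh (fun _ => σ) hmono (fun i => ordLtSucc σ)
    apply Set.Finite.subset (this.union (Set.finite_singleton σ))
    rintro ζ ⟨h1, h2⟩
    rcases (ordLtSuccIff.mp h1).lt_or_eq with h | h
    · left
      refine ⟨h, ?_⟩
      rw [altSum_zero_dim]
      exact h2
    · right; exact h
  · exfalso
    rcases hξ with ⟨σ, hσ⟩ | h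
    · subst hσ
      rw [Ordinal.add_one_eq_succ] at hlim
      exact Order.not_isSuccLimit_succ σ hlim
    · rw [Nat.cast_zero, Cardinal.aleph_zero] at h
      exact absurd (Ordinal.aleph0_le_cof.2 hlim) (not_le.mpr h)

lemma EXT {A : Type*} [AddCommGroup A] (q : ℕ)
    (trivq : ∀ (ξ' : Ordinal) (E : (Fin q → Ordinal.{0}) → Ordinal.{0} → A),
      ((∃ σ, ξ' = σ + 1) ∨ Ordinal.cof ξ' < Cardinal.aleph (q : Ordinal)) →
      NCoherent ξ' E → NTrivial ξ' E)
    (ξ η : Ordinal) (hξη : ξ < η)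
    (hξ : (∃ σ, ξ = σ + 1) ∨ Ordinal.cof ξ < Cardinal.aleph (q : Ordinal))
    (Φ : (Fin (q + 1) → Ordinal) → Ordinal → A)
    (hΦ : NTrivial η Φ)
    (Ψ : (Fin q → Ordinal) → Ordinal → A)
    (hΨ : IsNTrivialization ξ Φ Ψ) :
    ∃ Ψ', IsNTrivialization η Φ Ψ' ∧
      ∀ β : Fin q → Ordinal, StrictMono β → (∀ i, β i < ξ) →
        ∀ ζ, ζ < ξ → (∀ i, ζ < β i) → Ψ' β ζ = Ψ β ζ := by
  classical
  have hΦ' : ∃ Ψ₀, IsNTrivialization η Φ Ψ₀ := hΦ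
  obtain ⟨Ψ₀, hΨ₀⟩ := hΦ'
  set E : (Fin q → Ordinal.{0}) → Ordinal.{0} → A := fun β ζ => Ψ β ζ - Ψ₀ β ζ with hE
  have hept : ∀ (b : Fin q → Ordinal) (z : Ordinal), E b z = Ψ b z - Ψ₀ b z := fun _ _ => rfl
  have hcohE : NCoherent ξ E := by
    intro β hm hlt
    apply Set.Finite.subset ((hΨ β hm hlt).union (hΨ₀ β hm (fun i => (hlt i).trans hξη)))
    intro ζ hz
    obtain ⟨h1, h2⟩ := hz
    by_contra hcon
    simp only [Set.mem_union, Set.mem_setOf_eq, not_or] at hcon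
    obtain ⟨hA, hB⟩ := hcon
    apply h2
    have eA : altSum Ψ β ζ = Φ β ζ := by
      by_contra hne; exact hA ⟨h1, hne⟩
    have eB : altSum Ψ₀ β ζ = Φ β ζ := by
      by_contra hne; exact hB ⟨h1, hne⟩
    have : altSum E β ζ = altSum Ψ β ζ - altSum Ψ₀ β ζ := by
      unfold altSum
      rw [← Finset.sum_sub_distrib]
      apply Finset.sum_congr rfl
      intro i _
      rw [← smul_sub]
    rw [this, eA, eB]
    exact sub_self _
  have hC : ∃ C : (Fin q → Ordinal.{0}) → Ordinal.{0} → A,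
      (∀ γ : Fin (q+1) → Ordinal, StrictMono γ → (∀ i, γ i < η) →
        {ζ : Ordinal | ζ < γ 0 ∧ altSum C γ ζ ≠ 0}.Finite) ∧
      (∀ β : Fin q → Ordinal, StrictMono β → (∀ i, β i < ξ) →
        {ζ : Ordinal | (∀ i, ζ < β i) ∧ ζ < ξ ∧ C β ζ ≠ E β ζ}.Finite) := by
    cases q with
    | zero =>
      have htri : {ζ : Ordinal | ζ < ξ ∧ E Fin.elim0 ζ ≠ 0}.Finite := trivq ξ E hξ hcohE
      refine ⟨fun β ζ => if ζ < ξ then E β ζ else 0, ?_, ?_⟩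
      · intro γ hm hlt
        apply Set.Finite.subset htri
        rintro ζ ⟨h1, h2⟩
        rw [altSum_zero_dim] at h2
        by_cases hz : ζ < ξ
        · refine ⟨hz, ?_⟩
          intro h0
          apply h2
          rw [if_pos hz, h0]
        · exfalso; apply h2; rw [if_neg hz]
      · intro β hm hlt
        apply Set.Finite.subset Set.finite_empty
        rintro ζ ⟨h1, h2, h3⟩
        exact h3 (if_pos h2)
    | succ r =>
      have htri : ∃ Θ, IsNTrivialization ξ E Θ := trivq ξ E hξ hcohE
      obtain ⟨Θ, hΘ⟩ := htri
      refine ⟨fun β ζ => altSum Θ β ζ, ?_, ?_⟩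
      · intro γ hm hlt
        apply Set.Finite.subset Set.finite_empty
        rintro ζ ⟨h1, h2⟩
        exact h2 (altSum_altSum Θ γ ζ)
      · intro β hm hlt
        apply Set.Finite.subset (hΘ β hm hlt)
        rintro ζ ⟨h1, h2, h3⟩
        exact ⟨h1 0, h3⟩
  obtain ⟨C, hC1, hC2⟩ := hC
  set Ψ' : (Fin q → Ordinal.{0}) → Ordinal.{0} → A :=
    fun β ζ => if StrictMono β ∧ (∀ i, β i < ξ) ∧ ζ < ξ then Ψ β ζ else Ψ₀ β ζ + C β ζ
    with hΨ'def
  have hψpt : ∀ b z, Ψ' b z = if StrictMono b ∧ (∀ i, b i < ξ) ∧ z < ξ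
      then Ψ b z else Ψ₀ b z + C b z := fun _ _ => rfl
  refine ⟨Ψ', ?_, ?_⟩
  · intro γ hm hlt
    have hTfin : ∀ i : Fin (q+1),
        {ζ : Ordinal | ζ < γ 0 ∧
          Ψ' (γ ∘ i.succAbove) ζ ≠ Ψ₀ (γ ∘ i.succAbove) ζ + C (γ ∘ i.succAbove) ζ}.Finite := by
      intro i
      by_cases hlow : ∀ j, (γ ∘ i.succAbove) j < ξ
      · apply Set.Finite.subset (hC2 (γ ∘ i.succAbove) (hm.comp (Fin.strictMono_succAbove i)) hlow)
        rintro ζ ⟨h1, h2⟩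
        by_cases hz : ζ < ξ
        · refine ⟨fun j => lt_of_lt_of_le h1 (hm.monotone (Fin.zero_le _)), hz, ?_⟩
          intro hCE
          apply h2
          rw [hψpt, if_pos ⟨hm.comp (Fin.strictMono_succAbove i), hlow, hz⟩, hept] at *
          rw [hCE]
          abel
        · exfalso
          apply h2
          rw [hψpt, if_neg (fun hcond => hz hcond.2.2)]
      · apply Set.Finite.subset Set.finite_empty
        rintro ζ ⟨h1, h2⟩
        apply h2
        rw [hψpt, if_neg (fun hcond => hlow hcond.2.1)]
    apply Set.Finite.subset (((hΨ₀ γ hm hlt).union (hC1 γ hm hlt)).union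
      (Set.finite_iUnion hTfin))
    rintro ζ ⟨h1, h2⟩
    by_contra hmem
    simp only [Set.mem_union, Set.mem_iUnion, Set.mem_setOf_eq, not_or, not_exists] at hmem
    obtain ⟨⟨hm0, hmC⟩, hmT⟩ := hmem
    apply h2
    have e0 : altSum Ψ₀ γ ζ = Φ γ ζ := by
      by_contra hne; exact hm0 ⟨h1, hne⟩
    have eC : altSum C γ ζ = 0 := by
      by_contra hne; exact hmC ⟨h1, hne⟩
    have eT : ∀ i : Fin (q+1), Ψ' (γ ∘ i.succAbove) ζ
        = Ψ₀ (γ ∘ i.succAbove) ζ + C (γ ∘ i.succAbove) ζ := by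
      intro i
      by_contra hne
      exact hmT i ⟨h1, hne⟩
    have : altSum Ψ' γ ζ = altSum Ψ₀ γ ζ + altSum C γ ζ := by
      unfold altSum
      rw [← Finset.sum_add_distrib]
      apply Finset.sum_congr rfl
      intro i _
      rw [← smul_add, eT i]
    rw [this, e0, eC, add_zero]
  · intro β hβ hlt ζ hζ hζβ
    rw [hψpt, if_pos ⟨hβ, hlt, hζ⟩]

open Classical in
noncomputable def extendSeq {A : Type*} [AddCommGroup A] {q : ℕ}
    (E : (Fin (q+1) → Ordinal.{0}) → Ordinal.{0} → A) (g : Ordinal → Ordinal) :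
    Ordinal → ((Fin q → Ordinal.{0}) → Ordinal.{0} → A) :=
  WellFounded.fix Ordinal.lt_wf (fun s prev =>
    if h : ∃ Θ', IsNTrivialization (g s) E Θ' ∧ ∀ t (ht : t < s), Agree (prev t ht) Θ' (g t)
    then h.choose else fun _ _ => 0)

open Classical in
lemma extendSeq_def {A : Type*} [AddCommGroup A] {q : ℕ}
    (E : (Fin (q+1) → Ordinal.{0}) → Ordinal.{0} → A) (g : Ordinal → Ordinal) (s : Ordinal) :
    extendSeq E g s =
      if h : ∃ Θ', IsNTrivialization (g s) E Θ' ∧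
          ∀ t (ht : t < s), Agree (extendSeq E g t) Θ' (g t)
      then h.choose else fun _ _ => 0 := by
  unfold extendSeq
  rw [WellFounded.fix_eq]

lemma TRIV {A : Type*} [AddCommGroup A] :
    ∀ (p : ℕ) (ξ : Ordinal) (E : (Fin p → Ordinal.{0}) → Ordinal.{0} → A),
      ((∃ σ, ξ = σ + 1) ∨ Ordinal.cof ξ < Cardinal.aleph (p : Ordinal)) →
      NCoherent ξ E → NTrivial ξ E := by
  intro p
  induction p with
  | zero =>
    intro ξ E hξ hcoh
    exact triv0 ξ hξ E hcoh
  | succ q IHq =>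
    intro ξ E hξ hcoh
    show ∃ Θ, IsNTrivialization ξ E Θ
    rcases Ordinal.zero_or_succ_or_isSuccLimit ξ with rfl | ⟨σ, hσ⟩ | hlim
    · exact ⟨fun _ _ => 0, fun β _ hlt => absurd (hlt 0) not_lt_zero⟩
    · rw [← Ordinal.add_one_eq_succ] at hσ
      subst hσ
      exact trivSuccS σ E hcoh
    · have hcard : Ordinal.cof ξ < Cardinal.aleph (((q+1) : ℕ) : Ordinal) := by
        rcases hξ with ⟨σ, hσ⟩ | h
        · subst hσ
          rw [Ordinal.add_one_eq_succ] at hlim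
          exact absurd hlim (Order.not_isSuccLimit_succ σ)
        · exact h
      have hcof_le : Ordinal.cof ξ ≤ Cardinal.aleph (q : Ordinal) := by
        have hcast : (((q+1) : ℕ) : Ordinal) = Order.succ (q : Ordinal) := by
          rw [Nat.cast_add, Nat.cast_one, Ordinal.add_one_eq_succ]
        rw [hcast, Cardinal.aleph_succ] at hcard
        exact Order.lt_succ_iff.mp hcard
      obtain ⟨f, hf⟩ := Ordinal.exists_fundamental_sequence ξ
      set g : Ordinal → Ordinal :=
        fun t => if h : t < (Ordinal.cof ξ).ord then f t h + 1 else 0 with hg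
      have hg1 : ∀ t (h : t < (Ordinal.cof ξ).ord), g t = f t h + 1 := fun t h => dif_pos h
      have gstrict : ∀ t t', t < t' → t' < (Ordinal.cof ξ).ord → g t < g t' := by
        intro t t' h1 h2
        rw [hg1 t (h1.trans h2), hg1 t' h2, Ordinal.add_one_eq_succ, Ordinal.add_one_eq_succ]
        exact Order.succ_lt_succ (hf.2.1 (h1.trans h2) h2 h1)
      have gmono : ∀ t t', t ≤ t' → t' < (Ordinal.cof ξ).ord → g t ≤ g t' := by
        intro t t' h1 h2
        rcases h1.lt_or_eq with h | rfl
        · exact (gstrict t t' h h2).le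
        · exact le_rfl
      have glt : ∀ t, t < (Ordinal.cof ξ).ord → g t < ξ := by
        intro t h
        rw [hg1 t h, Ordinal.add_one_eq_succ]
        exact hlim.succ_lt (hf.lt h)
      have gcof : ∀ x, x < ξ → ∃ t, t < (Ordinal.cof ξ).ord ∧ x < g t := by
        intro x hx
        have hx' : x < Ordinal.blsub (Ordinal.cof ξ).ord f := by
          rw [hf.blsub_eq]; exact hx
        rw [Ordinal.lt_blsub_iff] at hx'
        obtain ⟨t, ht, hle⟩ := hx'
        refine ⟨t, ht, ?_⟩
        rw [hg1 t ht]
        exact lt_of_le_of_lt hle (ordLtSucc _)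
      have main : ∀ s, s < (Ordinal.cof ξ).ord →
          IsNTrivialization (g s) E (extendSeq E g s) ∧
          ∀ t, t < s → Agree (extendSeq E g t) (extendSeq E g s) (g t) := by
        intro s
        induction s using Ordinal.induction with
        | h s IH =>
        intro hso
        set δs := Ordinal.bsup s (fun t _ => g t) with hδs
        have hδsle : δs ≤ f s hso := by
          apply Ordinal.bsup_le
          intro t ht
          rw [hg1 t (ht.trans hso), Ordinal.add_one_eq_succ, Order.succ_le_iff]
          exact hf.2.1 (ht.trans hso) hso ht
        have hδslt : δs < g s := by
          rw [hg1 s hso]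
          exact lt_of_le_of_lt hδsle (ordLtSucc _)
        have hgle : ∀ t, t < s → g t ≤ δs := fun t ht => Ordinal.le_bsup (fun t _ => g t) t ht
        obtain ⟨Θun, hΘun, hΘunAg⟩ := unionTriv E s g (extendSeq E g)
          (fun t t' h1 h2 => gmono t t' h1 (h2.trans hso))
          (fun t ht => (IH t ht (ht.trans hso)).1)
          (fun t t' h1 h2 => by
            rcases h1.lt_or_eq with h | rfl
            · exact (IH t' h2 (h2.trans hso)).2 t h
            · intro b _ _ z _ _; rfl)
          δs hgle
          (fun x hx => by
            rw [hδs, Ordinal.lt_bsup] at hx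
            obtain ⟨t, ht, hxt⟩ := hx
            exact ⟨t, ht, hxt⟩)
        have hδξ : (∃ σ, δs = σ + 1) ∨ Ordinal.cof δs < Cardinal.aleph (q : Ordinal) := by
          rcases Ordinal.zero_or_succ_or_isSuccLimit s with rfl | ⟨t, hts⟩ | hslim
          · right
            have hz : δs = 0 := by
              rw [hδs]
              exact Ordinal.bsup_zero _
            rw [hz, Ordinal.cof_zero]
            exact lt_of_lt_of_le Cardinal.aleph0_pos (Cardinal.aleph0_le_aleph _)
          · left
            rw [← Ordinal.add_one_eq_succ] at hts
            subst hts
            have hto : t < (Ordinal.cof ξ).ord := lt_trans (ordLtSucc t) hso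
            have hδg : δs = g t := by
              apply le_antisymm
              · apply Ordinal.bsup_le
                intro t' ht'
                exact gmono t' t (ordLtSuccIff.mp ht') hto
              · exact Ordinal.le_bsup _ t (ordLtSucc t)
            exact ⟨f t hto, by rw [hδg, hg1 t hto]⟩
          · right
            have hlt' : ∀ t (ht : t < s), (fun t (_ : t < s) => g t) t ht < δs := by
              intro t ht
              have h2 : t + 1 < s := by
                rw [Ordinal.add_one_eq_succ]
                exact hslim.succ_lt ht
              exact lt_of_lt_of_le (gstrict t (t+1) (ordLtSucc t) ((h2.trans hso)))
                (Ordinal.le_bsup _ (t+1) h2)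
            have h1 : Ordinal.cof δs ≤ s.card := Ordinal.cof_bsup_le hlt'
            have h2 : s.card < Ordinal.cof ξ := Cardinal.lt_ord.mp hso
            exact lt_of_le_of_lt h1 (lt_of_lt_of_le h2 hcof_le)
        have hNT : NTrivial (g s) E := by
          show ∃ Θ, IsNTrivialization (g s) E Θ
          rw [hg1 s hso]
          exact trivSuccS _ E (hcoh.mono (by rw [← hg1 s hso]; exact (glt s hso).le))
        obtain ⟨Θ', hΘ'1, hΘ'2⟩ := EXT q IHq δs (g s) hδslt hδξ E hNT Θun hΘun
        have hex : ∃ Θ'', IsNTrivialization (g s) E Θ'' ∧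
            ∀ t (ht : t < s), Agree (extendSeq E g t) Θ'' (g t) := by
          refine ⟨Θ', hΘ'1, ?_⟩
          intro t ht β hβ hco z hz hzb
          have hcoδ : ∀ i, β i < δs := fun i => lt_of_lt_of_le (hco i) (hgle t ht)
          have hzδ : z < δs := lt_of_lt_of_le hz (hgle t ht)
          rw [hΘ'2 β hβ hcoδ z hzδ hzb]
          exact hΘunAg t ht β hβ hco z hz hzb
        constructor
        · rw [extendSeq_def, dif_pos hex]
          exact hex.choose_spec.1
        · intro t ht
          rw [extendSeq_def E g s, dif_pos hex]
          exact hex.choose_spec.2 t ht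
      obtain ⟨ΘZ, hΘZ, _⟩ := unionTriv E (Ordinal.cof ξ).ord g (extendSeq E g)
        (fun t t' h1 h2 => gmono t t' h1 h2)
        (fun t ht => (main t ht).1)
        (fun t t' h1 h2 => by
          rcases h1.lt_or_eq with h | rfl
          · exact (main t' h2).2 t h
          · intro b _ _ z _ _; rfl)
        ξ (fun t ht => (glt t ht).le) gcof
      exact ⟨ΘZ, hΘZ⟩

/-- Lemma: for `n > m ≥ 0` (here `n = p + 1` with `m ≤ p`) and `ξ < η` with `ξ` a successor
or `cf (ξ) < ℵ_m`, if `Φ` is an `n`-trivial family of height `η`, then any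
`n`-trivialization `Ψ` of `Φ ↾ ξ` extends to an `n`-trivialization `Ψ'` of `Φ`. -/
theorem statement12 (A : Type*) [AddCommGroup A] (m p : ℕ) (hmp : m ≤ p)
    (ξ η : Ordinal) (hξη : ξ < η)
    (hξ : (∃ σ, ξ = σ + 1) ∨ Ordinal.cof ξ < Cardinal.aleph (m : Ordinal))
    (Φ : (Fin (p + 1) → Ordinal) → Ordinal → A)
    (hΦ : NTrivial η Φ)
    (Ψ : (Fin p → Ordinal) → Ordinal → A)
    (hΨ : IsNTrivialization ξ Φ Ψ) :
    ∃ Ψ' : (Fin p → Ordinal) → Ordinal → A, IsNTrivialization η Φ Ψ' ∧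
      ∀ β : Fin p → Ordinal, StrictMono β → (∀ i, β i < ξ) →
        ∀ ζ, ζ < ξ → (∀ i, ζ < β i) → Ψ' β ζ = Ψ β ζ := by
  have hξ' : (∃ σ, ξ = σ + 1) ∨ Ordinal.cof ξ < Cardinal.aleph (p : Ordinal) := by
    rcases hξ with h | h
    · exact Or.inl h
    · exact Or.inr (lt_of_lt_of_le h (Cardinal.aleph_le_aleph.2 (Nat.cast_le.2 hmp)))
  exact EXT p (fun ξ' E h hc => TRIV p ξ' E h hc) ξ η hξη hξ' Φ hΦ Ψ hΨ
end
end

section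
/- Let n ≥ 1, let A be an abelian group, let μ be an uncountable cardinal with |A| < μ, and let λ be a regular uncountable cardinal. Suppose 𝒰 is an ultrafilter on λ such that (i) every X ⊆ λ with |λ ∖ X| < λ belongs to 𝒰, and (ii) 𝒰 is μ-complete, i.e., the intersection of any family of fewer than μ members of 𝒰 belongs to 𝒰. Then every n-coherent A-valued family of height λ is n-trivial. -/
noncomputable section
open Ordinal Set

lemma snoc_comp_succAbove' {α : Sort*} {n : ℕ} (β : Fin (n+1) → α) (γ : α) (i : Fin (n+1)) :
    (Fin.snoc β γ : Fin (n+2) → α) ∘ (i.castSucc).succAbove = Fin.snoc (β ∘ i.succAbove) γ := by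
  funext j
  refine Fin.lastCases ?_ (fun j => ?_) j
  · have h1 : (i.castSucc).succAbove (Fin.last n) = Fin.last (n+1) := by
      rw [Fin.succAbove_of_le_castSucc _ _ (Fin.castSucc_le_castSucc_iff.2 (Fin.le_last i)),
        Fin.succ_last]
    simp [h1]
  · simp [Fin.castSucc_succAbove_castSucc]

lemma strictMono_snoc' {n : ℕ} {β : Fin (n+1) → Ordinal} (hβ : StrictMono β) {γ : Ordinal}
    (hγ : ∀ i, β i < γ) : StrictMono (Fin.snoc β γ : Fin (n+2) → Ordinal) := by
  intro a b hab
  obtain ⟨a', rfl⟩ := Fin.exists_castSucc_eq.2 (Fin.ne_last_of_lt hab)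
  refine Fin.lastCases ?_ (fun b' hb => ?_) b hab
  · intro _; simpa using hγ a'
  · obtain hb' := Fin.castSucc_lt_castSucc_iff.1 hb
    simpa using hβ hb'

lemma altSum_snoc' {A : Type*} [AddCommGroup A] {n : ℕ}
    (Φ : (Fin (n+1) → Ordinal) → Ordinal → A) (β : Fin (n+1) → Ordinal) (γ ξ : Ordinal) :
    altSum Φ (Fin.snoc β γ) ξ
      = (∑ i : Fin (n+1), ((-1:ℤ)^(i:ℕ)) • Φ (Fin.snoc (β ∘ i.succAbove) γ) ξ)
        + ((-1:ℤ)^(n+1)) • Φ β ξ := by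
  unfold altSum
  rw [Fin.sum_univ_castSucc]
  congr 1
  · refine Finset.sum_congr rfl fun i _ => ?_
    rw [snoc_comp_succAbove']
    simp
  · rw [Fin.succAbove_last, Fin.snoc_comp_castSucc]
    simp

/-- Theorem: if `λ` is regular uncountable, `μ > |A|` is uncountable, and `𝒰` is an
ultrafilter on `λ` which is `μ`-complete and contains all `X ⊆ λ` with `|λ \ X| < λ`, then
every `n`-coherent `A`-valued family of height `λ` is `n`-trivial (`n = p + 1 ≥ 1`). -/
theorem statement15 (p : ℕ) (A : Type) [AddCommGroup A]
    (μ lam : Cardinal) (hμ : Cardinal.aleph0 < μ) (hA : Cardinal.mk A < μ)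
    (hreg : lam.IsRegular) (hunc : Cardinal.aleph0 < lam)
    (U : Set (Set Ordinal))
    (hU1 : ∀ X ∈ U, X ⊆ Set.Iio lam.ord)
    (hU2 : ∅ ∉ U)
    (hU3 : ∀ X ∈ U, ∀ Y, X ⊆ Y → Y ⊆ Set.Iio lam.ord → Y ∈ U)
    (hUultra : ∀ X, X ⊆ Set.Iio lam.ord → X ∈ U ∨ (Set.Iio lam.ord \ X) ∈ U)
    (hUtail : ∀ X, X ⊆ Set.Iio lam.ord →
      Cardinal.mk ↥(Set.Iio lam.ord \ X) < Cardinal.lift.{1} lam → X ∈ U)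
    (hUcomplete : ∀ S : Set (Set Ordinal), S ⊆ U → S.Nonempty →
      Cardinal.mk ↥S < Cardinal.lift.{1} μ → ⋂₀ S ∈ U)
    (Φ : (Fin (p + 1) → Ordinal) → Ordinal → A)
    (hΦ : NCoherent lam.ord Φ) :
    NTrivial lam.ord Φ := by
  have hlim : Order.IsSuccLimit lam.ord := Cardinal.isSuccLimit_ord hreg.aleph0_le
  classical
  have hμlift : Cardinal.aleph0 < Cardinal.lift.{1} μ := by
    have h : Cardinal.lift.{1} Cardinal.aleph0 < Cardinal.lift.{1} μ := Cardinal.lift_lt.2 hμ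
    rwa [Cardinal.lift_aleph0] at h
  have hrange : ∀ {α : Type} (g : α → Set Ordinal),
      Cardinal.mk ↥(Set.range g) ≤ Cardinal.lift.{1} (Cardinal.mk α) := by
    intro α g
    have h := Cardinal.mk_range_le_lift (f := g)
    rwa [Cardinal.lift_id'] at h
  -- tail sets belong to U
  have htail : ∀ (m : ℕ) (τ : Fin m → Ordinal), (∀ j, τ j < lam.ord) →
      {γ | γ ∈ Set.Iio lam.ord ∧ ∀ j, τ j < γ} ∈ U := by
    intro m τ hτ
    apply hUtail _ (fun γ h => h.1)
    have hsup : Finset.univ.sup τ < lam.ord := by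
      rcases (Finset.univ : Finset (Fin m)).eq_empty_or_nonempty with h | h
      · rw [h]; simpa using hlim.pos
      · exact (Finset.sup_lt_iff (by simpa using hlim.pos)).2 fun j _ => hτ j
    have hsub : Set.Iio lam.ord \ {γ | γ ∈ Set.Iio lam.ord ∧ ∀ j, τ j < γ}
        ⊆ Set.Iio (Order.succ (Finset.univ.sup τ)) := by
      rintro γ ⟨hγ, hγ2⟩
      simp only [Set.mem_setOf_eq, not_and, not_forall, not_lt] at hγ2
      obtain ⟨j, hj⟩ := hγ2 hγ
      exact Order.lt_succ_iff.2 (hj.trans (Finset.le_sup (Finset.mem_univ j)))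
    calc Cardinal.mk ↥(Set.Iio lam.ord \ {γ | γ ∈ Set.Iio lam.ord ∧ ∀ j, τ j < γ})
        ≤ Cardinal.mk ↥(Set.Iio (Order.succ (Finset.univ.sup τ))) :=
          Cardinal.mk_le_mk_of_subset hsub
      _ = Cardinal.lift.{1} (Order.succ (Finset.univ.sup τ)).card := Ordinal.mk_Iio_ordinal _
      _ < Cardinal.lift.{1} lam :=
          Cardinal.lift_lt.2 (Cardinal.lt_ord.1 (hlim.succ_lt hsup))
  -- the sets used for the ultrafilter limit
  set S : (Fin p → Ordinal) → Ordinal → A → Set Ordinal := fun τ ξ a =>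
    {γ | γ ∈ Set.Iio lam.ord ∧ (∀ j, τ j < γ) ∧ Φ (Fin.snoc τ γ) ξ = a} with hS
  have hSsub : ∀ τ ξ a, S τ ξ a ⊆ Set.Iio lam.ord := fun τ ξ a γ h => h.1
  -- existence of ultrafilter limits
  have hex : ∀ τ : Fin p → Ordinal, (∀ j, τ j < lam.ord) → ∀ ξ, ∃ a, S τ ξ a ∈ U := by
    intro τ hτ ξ
    by_contra hno
    push_neg at hno
    set T : Set Ordinal := {γ | γ ∈ Set.Iio lam.ord ∧ ∀ j, τ j < γ} with hT
    have hTU : T ∈ U := htail p τ hτ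
    set C : A → Set Ordinal := fun a => Set.Iio lam.ord \ S τ ξ a with hC
    have hCU : ∀ a, C a ∈ U := fun a => (hUultra _ (hSsub τ ξ a)).resolve_left (hno a)
    have hFU : ⋂₀ (insert T (Set.range C)) ∈ U := by
      apply hUcomplete
      · rintro X (rfl | ⟨a, rfl⟩)
        · exact hTU
        · exact hCU a
      · exact ⟨T, Set.mem_insert _ _⟩
      · calc Cardinal.mk ↥(insert T (Set.range C)) ≤ Cardinal.mk ↥(Set.range C) + 1 :=
              Cardinal.mk_insert_le
          _ ≤ Cardinal.lift.{1} (Cardinal.mk A) + 1 := add_le_add_left (hrange C) 1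
          _ < Cardinal.lift.{1} μ := by
              apply Cardinal.add_lt_of_lt hμlift.le
              · exact Cardinal.lift_lt.2 hA
              · exact Cardinal.one_lt_aleph0.trans hμlift
    have hempty : ⋂₀ (insert T (Set.range C)) = ∅ := by
      ext γ
      simp only [Set.mem_sInter, Set.mem_insert_iff, Set.mem_empty_iff_false, iff_false]
      intro hmem
      have hγT : γ ∈ T := hmem T (Or.inl rfl)
      have hγC : γ ∈ C (Φ (Fin.snoc τ γ) ξ) := hmem _ (Or.inr ⟨_, rfl⟩)
      exact hγC.2 ⟨hγT.1, hγT.2, rfl⟩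
    rw [hempty] at hFU
    exact hU2 hFU
  -- the trivialization
  set val : (Fin p → Ordinal) → Ordinal → A := fun τ ξ =>
    if h : ∃ a, S τ ξ a ∈ U then h.choose else 0 with hvaldef
  have hval : ∀ τ : Fin p → Ordinal, (∀ j, τ j < lam.ord) → ∀ ξ, S τ ξ (val τ ξ) ∈ U := by
    intro τ hτ ξ
    have h := hex τ hτ ξ
    simp only [hvaldef, dif_pos h]
    exact h.choose_spec
  refine ⟨fun τ ξ => ((-1:ℤ)^p) • val τ ξ, ?_⟩
  intro β hβ hβδ
  by_contra hinf
  have hinf : {ξ : Ordinal | ξ < β 0 ∧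
      altSum (fun τ ξ => ((-1:ℤ)^p) • val τ ξ) β ξ ≠ Φ β ξ}.Infinite := hinf
  set f := hinf.natEmbedding with hf
  -- intersect all the limit sets along the bad points, plus a tail set
  set G : ℕ → Set Ordinal := fun k =>
    ⋂₀ (Set.range fun i : Fin (p+1) =>
      S (β ∘ i.succAbove) (f k) (val (β ∘ i.succAbove) (f k))) with hG
  have hcoords : ∀ i : Fin (p+1), ∀ j, (β ∘ i.succAbove) j < lam.ord := fun i j => hβδ _
  have hGU : ∀ k, G k ∈ U := by
    intro k
    apply hUcomplete
    · rintro X ⟨i, rfl⟩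
      exact hval _ (hcoords i) _
    · exact ⟨_, ⟨0, rfl⟩⟩
    · calc Cardinal.mk ↥(Set.range fun i : Fin (p+1) =>
            S (β ∘ i.succAbove) (f k) (val (β ∘ i.succAbove) (f k)))
          ≤ Cardinal.lift.{1} (Cardinal.mk (Fin (p+1))) := hrange _
        _ < Cardinal.aleph0 := by
            rw [Cardinal.mk_fin, Cardinal.lift_natCast]
            exact Cardinal.nat_lt_aleph0 _
        _ < Cardinal.lift.{1} μ := hμlift
  set T : Set Ordinal := {γ | γ ∈ Set.Iio lam.ord ∧ ∀ j, β j < γ} with hT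
  have hTU : T ∈ U := htail (p+1) β hβδ
  have hHU : ⋂₀ (insert T (Set.range G)) ∈ U := by
    apply hUcomplete
    · rintro X (rfl | ⟨k, rfl⟩)
      · exact hTU
      · exact hGU k
    · exact ⟨T, Set.mem_insert _ _⟩
    · calc Cardinal.mk ↥(insert T (Set.range G)) ≤ Cardinal.mk ↥(Set.range G) + 1 :=
            Cardinal.mk_insert_le
        _ ≤ Cardinal.lift.{1} (Cardinal.mk ℕ) + 1 := add_le_add_left (hrange G) 1
        _ < Cardinal.lift.{1} μ := by
            apply Cardinal.add_lt_of_lt hμlift.le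
            · rw [Cardinal.mk_nat, Cardinal.lift_aleph0]; exact hμlift
            · exact Cardinal.one_lt_aleph0.trans hμlift
  have hHne : (⋂₀ (insert T (Set.range G))).Nonempty := by
    rcases Set.eq_empty_or_nonempty (⋂₀ (insert T (Set.range G))) with h | h
    · rw [h] at hHU; exact absurd hHU hU2
    · exact h
  obtain ⟨γ, hγ⟩ := hHne
  have hγT : γ ∈ T := hγ T (Set.mem_insert _ _)
  have hγG : ∀ k, γ ∈ G k := fun k => hγ (G k) (Set.mem_insert_iff.2 (Or.inr ⟨k, rfl⟩))
  -- apply coherence to the extended tuple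
  have hmono : StrictMono (Fin.snoc β γ : Fin (p+2) → Ordinal) := strictMono_snoc' hβ hγT.2
  have hsnoclt : ∀ i : Fin (p+2), (Fin.snoc β γ : Fin (p+2) → Ordinal) i < lam.ord := by
    intro i
    refine Fin.lastCases ?_ (fun i => ?_) i
    · simpa using hγT.1
    · simpa using hβδ i
  have hfin := hΦ (Fin.snoc β γ) hmono hsnoclt
  have hzero : (Fin.snoc β γ : Fin (p+2) → Ordinal) 0 = β 0 := by
    rw [show (0 : Fin (p+2)) = Fin.castSucc 0 by simp, Fin.snoc_castSucc]
  -- every bad point is a coherence failure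
  have hmem : ∀ k : ℕ, (f k : Ordinal) ∈
      {ξ : Ordinal | ξ < (Fin.snoc β γ : Fin (p+2) → Ordinal) 0 ∧
        altSum Φ (Fin.snoc β γ) ξ ≠ 0} := by
    intro k
    obtain ⟨hlt, hne⟩ := (f k).2
    refine ⟨by rw [hzero]; exact hlt, fun hcontra => hne ?_⟩
    have hvals : ∀ i : Fin (p+1),
        val (β ∘ i.succAbove) (f k) = Φ (Fin.snoc (β ∘ i.succAbove) γ) (f k) := by
      intro i
      have := hγG k
      have hmem' : γ ∈ S (β ∘ i.succAbove) (f k) (val (β ∘ i.succAbove) (f k)) :=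
        this _ ⟨i, rfl⟩
      exact hmem'.2.2.symm
    have hkey : ∀ ξ : Ordinal, altSum (fun τ ξ => ((-1:ℤ)^p) • val τ ξ) β ξ
        = ((-1:ℤ)^p) • (∑ i : Fin (p+1), ((-1:ℤ)^(i:ℕ)) • val (β ∘ i.succAbove) ξ) := by
      intro ξ
      unfold altSum
      rw [Finset.smul_sum]
      refine Finset.sum_congr rfl fun i _ => ?_
      rw [smul_smul, smul_smul]
      congr 1
      ring
    have hsign : ((-1:ℤ)^p) * ((-1:ℤ)^(p+1)) = -1 := by
      rw [← pow_add]
      exact Odd.neg_one_pow ⟨p, by ring⟩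
    rw [hkey]
    simp only [hvals]
    have h2 := altSum_snoc' Φ β γ (f k)
    rw [hcontra] at h2
    have h3 : (∑ i : Fin (p+1), ((-1:ℤ)^(i:ℕ)) • Φ (Fin.snoc (β ∘ i.succAbove) γ) (f k))
        = -(((-1:ℤ)^(p+1)) • Φ β (f k)) := eq_neg_of_add_eq_zero_left h2.symm
    rw [h3, smul_neg, smul_smul, hsign]
    simp
  have hinj : Function.Injective (fun k : ℕ => (f k : Ordinal)) :=
    Subtype.val_injective.comp f.injective
  exact (Set.infinite_of_injective_forall_mem hinj hmem) hfin
end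
end

section
/- Let ε be an ordinal of uncountable cofinality, let A be an abelian group, and let Φ = {φ_α : α → A | α < ε} be a coherent family. For α < β < ε set e(α,β) = {ξ < α : φ_α(ξ) ≠ φ_β(ξ)}, and define ℐ = {b ∈ [ε]^{≤ℵ₀} : there exists β ≥ sup(b) with β < ε such that for every n ∈ ω the set {α ∈ b : |e(α,β)| ≤ n} is finite}. Then ℐ is a P-ideal on ε: it is an ideal of countable subsets of ε containing all finite subsets of ε, and for every countable collection {b_n : n ∈ ω} ⊆ ℐ there exists b ∈ ℐ with b_n ∖ b finite for all n. -/
noncomputable section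
open Ordinal Set

/-- `e (α, β) = {ξ < α | φ_α (ξ) ≠ φ_β (ξ)}`. -/
def eSet {A : Type*} (Φ : Ordinal.{0} → Ordinal.{0} → A) (α β : Ordinal.{0}) :
    Set Ordinal.{0} :=
  {ξ | ξ < α ∧ Φ α ξ ≠ Φ β ξ}

/-- The ideal `ℐ` of countable `b ⊆ ε` such that for some `β ≥ sup b` (`β < ε`),
`{α ∈ b : |e (α, β)| ≤ n}` is finite for every `n`. -/
def walkIdeal {A : Type*} (Φ : Ordinal.{0} → Ordinal.{0} → A) (ε : Ordinal.{0}) :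
    Set (Set Ordinal.{0}) :=
  {b | b ⊆ Set.Iio ε ∧ b.Countable ∧ ∃ β, β < ε ∧ (∀ x ∈ b, x ≤ β) ∧
    ∀ n : ℕ, {α ∈ b | (eSet Φ α β).ncard ≤ n}.Finite}

lemma eSet_finite {A : Type*} {ε : Ordinal.{0}} {Φ : Ordinal.{0} → Ordinal.{0} → A}
    (hΦ : CoherentFam ε Φ) {α β : Ordinal} (hαβ : α ≤ β) (hβ : β < ε) :
    (eSet Φ α β).Finite := by
  refine (hΦ α β hαβ hβ).subset fun ξ hξ => ⟨hξ.1, fun h => hξ.2 h.symm⟩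

/-- Key lemma: the witness `β` can be raised. -/
lemma keyFin {A : Type*} {ε : Ordinal.{0}} {Φ : Ordinal.{0} → Ordinal.{0} → A}
    (hΦ : CoherentFam ε Φ) {β β' : Ordinal} (hle : β' ≤ β) (hβ : β < ε)
    {b : Set Ordinal} (hb : ∀ x ∈ b, x ≤ β')
    (h : ∀ n : ℕ, {α ∈ b | (eSet Φ α β').ncard ≤ n}.Finite) :
    ∀ n : ℕ, {α ∈ b | (eSet Φ α β).ncard ≤ n}.Finite := by
  intro n
  have hd : ({ξ : Ordinal | ξ < β' ∧ Φ β ξ ≠ Φ β' ξ}).Finite := hΦ β' β hle hβ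
  refine (h (n + ({ξ : Ordinal | ξ < β' ∧ Φ β ξ ≠ Φ β' ξ}).ncard)).subset fun α hα => ?_
  obtain ⟨hαb, hcard⟩ := hα
  have hαβ' : α ≤ β' := hb α hαb
  have hfβ : (eSet Φ α β).Finite := eSet_finite hΦ (hαβ'.trans hle) hβ
  refine ⟨hαb, ?_⟩
  have hsub : eSet Φ α β' ⊆ eSet Φ α β ∪ {ξ : Ordinal | ξ < β' ∧ Φ β ξ ≠ Φ β' ξ} := by
    intro ξ hξ
    by_cases hcase : Φ β ξ = Φ β' ξ
    · exact Or.inl ⟨hξ.1, fun h => hξ.2 (h.trans hcase)⟩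
    · exact Or.inr ⟨hξ.1.trans_le hαβ', hcase⟩
  calc (eSet Φ α β').ncard ≤ (eSet Φ α β ∪ {ξ : Ordinal | ξ < β' ∧ Φ β ξ ≠ Φ β' ξ}).ncard :=
        Set.ncard_le_ncard hsub (hfβ.union hd)
    _ ≤ (eSet Φ α β).ncard + ({ξ : Ordinal | ξ < β' ∧ Φ β ξ ≠ Φ β' ξ}).ncard :=
        Set.ncard_union_le _ _
    _ ≤ n + ({ξ : Ordinal | ξ < β' ∧ Φ β ξ ≠ Φ β' ξ}).ncard := Nat.add_le_add_right hcard _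

lemma boundLemma (ε : Ordinal.{0}) (hε : Cardinal.aleph0 < Ordinal.cof ε)
    (s : Set Ordinal.{0}) (hs : s.Countable) (hsub : s ⊆ Set.Iio ε) :
    ∃ β, β < ε ∧ ∀ x ∈ s, x ≤ β := by
  rcases s.eq_empty_or_nonempty with rfl | hne
  · refine ⟨0, ?_, by simp⟩
    rcases eq_zero_or_pos ε with rfl | h
    · simp at hε
    · exact h
  · obtain ⟨f, rfl⟩ := Set.Countable.exists_eq_range hs hne
    have hlt : (⨆ n, f n) < ε :=
      @Ordinal.iSup_lt_ord ℕ f ε (by simpa using hε) fun n => hsub (Set.mem_range_self n)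
    refine ⟨⨆ n, f n, hlt, ?_⟩
    rintro x ⟨n, rfl⟩
    exact Ordinal.le_iSup f n

/-- Claim: for `ε` of uncountable cofinality and a coherent family `Φ` of `A`-valued
functions of height `ε`, the collection `ℐ = walkIdeal Φ ε` is a P-ideal of countable
subsets of `ε`. -/
theorem statement16 (ε : Ordinal) (hε : Cardinal.aleph0 < Ordinal.cof ε)
    (A : Type*) [AddCommGroup A] (Φ : Ordinal → Ordinal → A) (hΦ : CoherentFam ε Φ) :
    (∀ b ∈ walkIdeal Φ ε, b.Countable ∧ b ⊆ Set.Iio ε) ∧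
    (∀ b : Set Ordinal, b ⊆ Set.Iio ε → b.Finite → b ∈ walkIdeal Φ ε) ∧
    (∀ b ∈ walkIdeal Φ ε, ∀ c, c ⊆ b → c ∈ walkIdeal Φ ε) ∧
    (∀ b ∈ walkIdeal Φ ε, ∀ c ∈ walkIdeal Φ ε, b ∪ c ∈ walkIdeal Φ ε) ∧
    (∀ F : ℕ → Set Ordinal, (∀ n, F n ∈ walkIdeal Φ ε) →
      ∃ b ∈ walkIdeal Φ ε, ∀ n, (F n \ b).Finite) := by
  refine ⟨fun b hb => ⟨hb.2.1, hb.1⟩, ?_, ?_, ?_, ?_⟩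
  · -- finite sets
    intro b hsub hfin
    obtain ⟨β, hβ, hub⟩ := boundLemma ε hε b hfin.countable hsub
    exact ⟨hsub, hfin.countable, β, hβ, hub, fun n => hfin.subset fun α hα => hα.1⟩
  · -- subsets
    rintro b ⟨hbsub, hbc, β, hβ, hub, hfin⟩ c hcb
    exact ⟨hcb.trans hbsub, hbc.mono hcb, β, hβ, fun x hx => hub x (hcb hx),
      fun n => (hfin n).subset fun α hα => ⟨hcb hα.1, hα.2⟩⟩
  · -- unions
    rintro b ⟨hbsub, hbc, β₁, hβ₁, hub₁, hfin₁⟩ c ⟨hcsub, hcc, β₂, hβ₂, hub₂, hfin₂⟩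
    refine ⟨Set.union_subset hbsub hcsub, hbc.union hcc, max β₁ β₂, max_lt hβ₁ hβ₂,
      fun x hx => ?_, fun n => ?_⟩
    · rcases hx with hx | hx
      · exact (hub₁ x hx).trans (le_max_left _ _)
      · exact (hub₂ x hx).trans (le_max_right _ _)
    · have h1 := keyFin hΦ (le_max_left β₁ β₂) (max_lt hβ₁ hβ₂) hub₁ hfin₁ n
      have h2 := keyFin hΦ (le_max_right β₁ β₂) (max_lt hβ₁ hβ₂) hub₂ hfin₂ n
      refine (h1.union h2).subset fun α hα => ?_
      rcases hα.1 with h | h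
      · exact Or.inl ⟨h, hα.2⟩
      · exact Or.inr ⟨h, hα.2⟩
  · -- P-ideal
    intro F hF
    choose hFsub hFc β hβ hub hfin using hF
    obtain ⟨B, hB, hubB⟩ := boundLemma ε hε (Set.range β) (Set.countable_range β)
      fun x ⟨n, hn⟩ => hn ▸ hβ n
    have hβB : ∀ n, β n ≤ B := fun n => hubB _ ⟨n, rfl⟩
    have hkey : ∀ n m : ℕ, {α ∈ F n | (eSet Φ α B).ncard ≤ m}.Finite :=
      fun n => keyFin hΦ (hβB n) hB (hub n) (hfin n)
    refine ⟨⋃ n, {α ∈ F n | n ≤ (eSet Φ α B).ncard}, ⟨?_, ?_, B, hB, ?_, ?_⟩, ?_⟩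
    · exact Set.iUnion_subset fun n α hα => hFsub n hα.1
    · exact Set.countable_iUnion fun n => (hFc n).mono fun α hα => hα.1
    · rintro x hx
      obtain ⟨n, hn⟩ := Set.mem_iUnion.1 hx
      exact (hub n x hn.1).trans (hβB n)
    · intro m
      have : {α ∈ ⋃ n, {α ∈ F n | n ≤ (eSet Φ α B).ncard} | (eSet Φ α B).ncard ≤ m} ⊆
          ⋃ n : Fin (m + 1), {α ∈ F n | (eSet Φ α B).ncard ≤ m} := by
        rintro α ⟨hα, hcard⟩
        obtain ⟨n, hn, hge⟩ := Set.mem_iUnion.1 hα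
        exact Set.mem_iUnion.2 ⟨⟨n, Nat.lt_succ_of_le (hge.trans hcard)⟩, hn, hcard⟩
      exact (Set.finite_iUnion fun n : Fin (m + 1) => hkey n m).subset this
    · intro n
      refine (hkey n n).subset fun α hα => ?_
      obtain ⟨hα1, hα2⟩ := hα
      refine ⟨hα1, ?_⟩
      by_contra h
      exact hα2 (Set.mem_iUnion.2 ⟨n, hα1, le_of_not_gt fun hlt => h (le_of_lt hlt)⟩)
end
end
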